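/- arXiv:1812.02219 — 8 statements merged into one kernel-verified Lean document; each statement's English description precedes it below -/
import Mathlib

section
/- Let n and q be positive integers with n ≤ q² + 3q − 1, and let T = {0, ∞} ∪ {k : k ∈ ℤ, 1 ≤ |k| ≤ q} ∪ {1/k : k ∈ ℤ, 1 ≤ |k| ≤ q} ⊆ ℚ ∪ {∞}. Then any two functions f, g : ℤ² → ℝ that are T-clue-equivalent on I_{n,n} agree at every point of I_{n,n}; equivalently, every solvable n × n RK puzzle with clue slopes T has a unique solution. -/
open Classical

/-- A slope is an element of `ℚ ∪ {∞}`; `none` denotes `∞`. -/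
abbrev Slope := Option ℚ

/-- The clue of `f` along the line of slope `s` (vertical line `x = c` when `s = ∞ = none`,
and the line `y = r·x + c` when `s = some r`), with respect to the grid
`I_{n,m} = {1,…,n} × {1,…,m} ⊆ ℤ²`: the sum of `f` over the grid points lying on the line. -/
noncomputable def clueSum (n m : ℕ) (s : Slope) (c : ℝ) (f : ℤ × ℤ → ℝ) : ℝ :=
  ∑ p ∈ (Finset.Icc (1 : ℤ) n ×ˢ Finset.Icc (1 : ℤ) m).filter
      (fun p => match s with
        | none => (p.1 : ℝ) = c
        | some r => (p.2 : ℝ) = (r : ℝ) * (p.1 : ℝ) + c),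
    f p

/-- `f` and `g` are `T`-clue-equivalent on `I_{n,m}`: for every slope `s ∈ T` and every line
of slope `s`, the clues of `f` and `g` along that line agree. -/
def ClueEquiv (n m : ℕ) (T : Set Slope) (f g : ℤ × ℤ → ℝ) : Prop :=
  ∀ s ∈ T, ∀ c : ℝ, clueSum n m s c f = clueSum n m s c g

/-- The entry `p ∈ I_{n,m}` is uniquely solvable with respect to the slope set `T`. -/
def UniqSolv (n m : ℕ) (T : Set Slope) (p : ℤ × ℤ) : Prop :=
  ∀ f g : ℤ × ℤ → ℝ, ClueEquiv n m T f g → f p = g p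

/-- The slope set `{0, ∞} ∪ {k : 1 ≤ |k| ≤ q} ∪ {1/k : 1 ≤ |k| ≤ q}`. -/
def slopesUpTo (q : ℕ) : Set Slope :=
  {some 0, none} ∪
    {s | ∃ k : ℤ, 1 ≤ |k| ∧ |k| ≤ (q : ℤ) ∧ (s = some (k : ℚ) ∨ s = some (1 / (k : ℚ)))}

noncomputable def LS (h : ℤ × ℤ → ℝ) (d p0 : ℤ × ℤ) : ℝ := ∑ᶠ t : ℤ, h (p0 + t • d)

def InBox (h : ℤ × ℤ → ℝ) (X0 X1 Y0 Y1 : ℤ) : Prop :=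
  ∀ p : ℤ × ℤ, h p ≠ 0 → X0 ≤ p.1 ∧ p.1 ≤ X1 ∧ Y0 ≤ p.2 ∧ p.2 ≤ Y1

lemma abs_le_of_between {lo x hi : ℤ} (h1 : lo ≤ x) (h2 : x ≤ hi) : |x| ≤ |lo| + |hi| := by
  rcases abs_cases x with ⟨e1, _⟩ | ⟨e1, _⟩ <;> rcases abs_cases lo with ⟨e2, _⟩ | ⟨e2, _⟩ <;>
    rcases abs_cases hi with ⟨e3, _⟩ | ⟨e3, _⟩ <;> omega

lemma line_support_finite {h : ℤ × ℤ → ℝ} {X0 X1 Y0 Y1 : ℤ} (hb : InBox h X0 X1 Y0 Y1)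
    {d : ℤ × ℤ} (hd : 1 ≤ d.1) (p0 : ℤ × ℤ) :
    (Function.support fun t : ℤ => h (p0 + t • d)).Finite := by
  apply Set.Finite.subset (Set.finite_Icc (-(|X0 - p0.1| + |X1 - p0.1|)) (|X0 - p0.1| + |X1 - p0.1|))
  intro t ht
  obtain ⟨h1, h2, -, -⟩ := hb _ ht
  have e1 : (p0 + t • d).1 = p0.1 + t * d.1 := rfl
  rw [e1] at h1 h2
  have habs : |t * d.1| ≤ |X0 - p0.1| + |X1 - p0.1| := abs_le_of_between (by omega) (by omega)
  rw [abs_mul] at habs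
  have hd1 : |d.1| = d.1 := abs_of_pos (by omega)
  have h3 : |t| ≤ |t| * |d.1| := le_mul_of_one_le_right (abs_nonneg t) (by rw [hd1]; omega)
  simp only [Set.mem_Icc]
  have := abs_le.mp (le_trans h3 habs)
  omega

lemma LS_eq_sum (h : ℤ × ℤ → ℝ) (d p0 : ℤ × ℤ) (w : Finset ℤ)
    (hw : ∀ t : ℤ, t ∉ w → h (p0 + t • d) = 0) :
    LS h d p0 = ∑ t ∈ w, h (p0 + t • d) :=
  finsum_eq_sum_of_support_subset _ (fun t ht => by by_contra hc; exact ht (hw t hc))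

lemma rat_eq_of_cross {r r' : ℚ} (hc : r'.num * (r.den : ℤ) = (r'.den : ℤ) * r.num) :
    r = r' := by
  have hd1 : ((r.den : ℚ)) ≠ 0 := by exact_mod_cast r.den_nz
  have hd2 : ((r'.den : ℚ)) ≠ 0 := by exact_mod_cast r'.den_nz
  rw [← Rat.num_div_den r, ← Rat.num_div_den r', div_eq_div_iff hd1 hd2]
  exact_mod_cast (by linarith : r.num * ((r'.den : ℤ)) = r'.num * ((r.den : ℤ)))

lemma den_coprime_num (r : ℚ) : IsCoprime ((r.den : ℤ)) r.num := by
  rw [Int.isCoprime_iff_gcd_eq_one]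
  unfold Int.gcd
  simp only [Int.natAbs_natCast]
  exact Nat.coprime_comm.mp r.reduced

lemma ghost_zero (S : Finset ℚ) :
    ∀ (X0 X1 Y0 Y1 : ℤ) (h : ℤ × ℤ → ℝ), InBox h X0 X1 Y0 Y1 →
      X1 + 1 - X0 ≤ ∑ r ∈ S, (r.den : ℤ) →
      (∀ r ∈ S, ∀ p0 : ℤ × ℤ, LS h ((r.den : ℤ), r.num) p0 = 0) →
      ∀ p, h p = 0 := by
  classical
  induction S using Finset.induction_on with
  | empty =>
    intro X0 X1 Y0 Y1 h hbox hx _ p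
    by_contra hp
    obtain ⟨h1, h2, -, -⟩ := hbox p hp
    simp only [Finset.sum_empty] at hx
    omega
  | @insert r S hrS IH =>
    intro X0 X1 Y0 Y1 h hbox hx hline p
    by_cases hXc : X1 < X0
    · by_contra hp; obtain ⟨h1, h2, -, -⟩ := hbox p hp; omega
    push_neg at hXc
    set d : ℤ × ℤ := ((r.den : ℤ), r.num) with hd_def
    have hd1 : (1 : ℤ) ≤ d.1 := by
      show (1:ℤ) ≤ (r.den : ℤ); exact_mod_cast r.pos
    set u : ℤ × ℤ → ℝ := fun p => ∑ k ∈ Finset.range ((p.1 - X0).toNat + 1), h (p - (k : ℤ) • d)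
      with hu_def
    -- (A) extension of the defining sum
    have hA : ∀ (p : ℤ × ℤ) (N : ℕ), (p.1 - X0).toNat + 1 ≤ N →
        u p = ∑ k ∈ Finset.range N, h (p - (k : ℤ) • d) := by
      intro p N hN
      simp only [hu_def]
      apply Finset.sum_subset (Finset.range_subset_range.mpr hN)
      intro k _ hk
      simp only [Finset.mem_range, not_lt] at hk
      by_contra hne
      obtain ⟨h1, -, -, -⟩ := hbox _ hne
      have e1 : (p - (k : ℤ) • d).1 = p.1 - (k : ℤ) * d.1 := rfl
      rw [e1] at h1
      have hk1 : p.1 - X0 + 1 ≤ (k : ℤ) := by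
        have := Int.self_le_toNat (p.1 - X0); push_cast; omega
      have hk2 : (k : ℤ) ≤ (k : ℤ) * d.1 := le_mul_of_one_le_right (by positivity) hd1
      linarith
    -- (B) difference identity
    have hB : ∀ p : ℤ × ℤ, h p = u p - u (p - d) := by
      intro p
      have h1 : u p = ∑ k ∈ Finset.range (((p.1 - X0).toNat + 1) + 1), h (p - (k : ℤ) • d) :=
        hA p _ (by omega)
      have h2 : u (p - d) = ∑ k ∈ Finset.range ((p.1 - X0).toNat + 1), h ((p - d) - (k : ℤ) • d) := by
        apply hA
        have e1 : (p - d).1 = p.1 - d.1 := rfl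
        have : (p - d).1 - X0 ≤ p.1 - X0 := by rw [e1]; omega
        have := Int.toNat_le_toNat this
        omega
      rw [Finset.sum_range_succ'] at h1
      have h1' : u p = (∑ k ∈ Finset.range ((p.1 - X0).toNat + 1), h ((p - d) - (k : ℤ) • d)) + h p := by
        rw [h1]
        congr 1
        · apply Finset.sum_congr rfl
          intro k _
          congr 1
          push_cast
          rw [add_smul, one_smul]
          abel
        · congr 1; push_cast; simp
      rw [h2]
      linarith [h1']
    -- (C) u vanishes to the right
    have hC : ∀ p : ℤ × ℤ, X1 - d.1 < p.1 → u p = 0 := by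
      intro p hp
      have hLS := hline r (Finset.mem_insert_self r S) p
      set M : ℕ := (p.1 - X0).toNat with hM
      have hw : ∀ t : ℤ, t ∉ Finset.Icc (-(M : ℤ)) 0 → h (p + t • d) = 0 := by
        intro t ht
        simp only [Finset.mem_Icc, not_and_or, not_le] at ht
        by_contra hne
        obtain ⟨h1, h2, -, -⟩ := hbox _ hne
        have e1 : (p + t • d).1 = p.1 + t * d.1 := rfl
        rw [e1] at h1 h2
        rcases ht with ht | ht
        · have hta : t * d.1 ≤ t := by nlinarith
          have hM' : p.1 - X0 ≤ (M : ℤ) := Int.self_le_toNat _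
          linarith
        · have h01 : (0:ℤ) < t := ht
          have hta : d.1 ≤ t * d.1 := le_mul_of_one_le_left (by linarith) h01
          linarith
      have hLSsum : LS h d p = ∑ t ∈ Finset.Icc (-(M : ℤ)) 0, h (p + t • d) := LS_eq_sum h d p _ hw
      have himg : Finset.Icc (-(M : ℤ)) 0 = (Finset.range (M + 1)).image (fun k : ℕ => -(k : ℤ)) := by
        ext t
        simp only [Finset.mem_Icc, Finset.mem_image, Finset.mem_range]
        constructor
        · intro ⟨ha, hb⟩; exact ⟨(-t).toNat, by omega, by omega⟩
        · rintro ⟨k, hk, rfl⟩; omega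
      have hsum : ∑ t ∈ Finset.Icc (-(M : ℤ)) 0, h (p + t • d)
          = ∑ k ∈ Finset.range (M + 1), h (p + (-(k : ℤ)) • d) := by
        rw [himg, Finset.sum_image (g := fun k : ℕ => -(k : ℤ)) (by intro x _ y _ hxy; have hxy' : -(x : ℤ) = -(y : ℤ) := hxy; omega)]
      have hu : u p = ∑ k ∈ Finset.range (M + 1), h (p + (-(k : ℤ)) • d) := by
        simp only [hu_def, ← hM]
        apply Finset.sum_congr rfl
        intro k _
        congr 1
        rw [neg_smul]
        abel
      rw [hu, ← hsum, ← hLSsum, hLS]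
    -- (E) u vanishes to the left
    have hE : ∀ p : ℤ × ℤ, p.1 < X0 → u p = 0 := by
      intro p hp
      simp only [hu_def]
      apply Finset.sum_eq_zero
      intro k _
      by_contra hne
      obtain ⟨h1, -, -, -⟩ := hbox _ hne
      have e1 : (p - (k : ℤ) • d).1 = p.1 - (k : ℤ) * d.1 := rfl
      rw [e1] at h1
      have hk2 : (0:ℤ) ≤ (k : ℤ) * d.1 := by positivity
      linarith
    set B : ℤ := (X1 - X0) * |d.2| with hB_def
    -- (F) the box for u
    have hF : InBox u X0 (X1 - d.1) (Y0 - B) (Y1 + B) := by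
      intro p hup
      have hx0 : X0 ≤ p.1 := by by_contra hc; push_neg at hc; exact hup (hE p hc)
      have hx1 : p.1 ≤ X1 - d.1 := by by_contra hc; push_neg at hc; exact hup (hC p hc)
      have hk : ∃ k ∈ Finset.range ((p.1 - X0).toNat + 1), h (p - (k : ℤ) • d) ≠ 0 := by
        apply Finset.exists_ne_zero_of_sum_ne_zero
        simpa only [hu_def] using hup
      obtain ⟨k, -, hkne⟩ := hk
      obtain ⟨g1, g2, g3, g4⟩ := hbox _ hkne
      have e1 : (p - (k : ℤ) • d).1 = p.1 - (k : ℤ) * d.1 := rfl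
      have e2 : (p - (k : ℤ) • d).2 = p.2 - (k : ℤ) * d.2 := rfl
      rw [e1] at g1 g2
      rw [e2] at g3 g4
      have hk0 : (0:ℤ) ≤ (k : ℤ) := by positivity
      have hka : (k : ℤ) ≤ (k : ℤ) * d.1 := le_mul_of_one_le_right hk0 hd1
      have hkL : (k : ℤ) ≤ X1 - X0 := by linarith
      have habs1 : (k : ℤ) * d.2 ≤ B := by
        rw [hB_def]
        nlinarith [le_abs_self d.2, abs_nonneg d.2]
      have habs2 : -B ≤ (k : ℤ) * d.2 := by
        rw [hB_def]
        nlinarith [neg_abs_le d.2, abs_nonneg d.2]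
      exact ⟨hx0, hx1, by linarith, by linarith⟩
    -- (G) line sums of u along remaining directions vanish
    have hG : ∀ r' ∈ S, ∀ p0 : ℤ × ℤ, LS u ((r'.den : ℤ), r'.num) p0 = 0 := by
      intro r' hr' p0
      set d' : ℤ × ℤ := ((r'.den : ℤ), r'.num) with hd'_def
      have hd'1 : (1 : ℤ) ≤ d'.1 := by
        show (1:ℤ) ≤ (r'.den : ℤ); exact_mod_cast r'.pos
      have hufin : ∀ q0 : ℤ × ℤ, (Function.support fun t : ℤ => u (q0 + t • d')).Finite :=
        fun q0 => line_support_finite hF hd'1 q0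
      have hstep : ∀ q0 : ℤ × ℤ, LS u d' q0 = LS u d' (q0 - d) := by
        intro q0
        have h0 := hline r' (Finset.mem_insert_of_mem hr') q0
        have hdecomp : LS h d' q0 = LS u d' q0 - LS u d' (q0 - d) := by
          unfold LS
          rw [← finsum_sub_distrib (hufin q0) (hufin (q0 - d))]
          apply finsum_congr
          intro t
          have e : (q0 + t • d') - d = (q0 - d) + t • d' := by abel
          rw [hB (q0 + t • d'), e]
        rw [h0] at hdecomp
        linarith
      have hiter : ∀ m : ℕ, LS u d' p0 = LS u d' (p0 - (m : ℤ) • d) := by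
        intro m
        induction m with
        | zero => simp
        | succ m ih =>
          rw [ih, hstep (p0 - (m : ℤ) • d)]
          congr 1
          push_cast
          rw [add_smul, one_smul]
          abel
      set φ : ℤ × ℤ → ℤ := fun p => d'.2 * p.1 - d'.1 * p.2 with hφ
      set C0 : ℤ := |d'.2| * (|X0| + |X1 - d.1|) + |d'.1| * (|Y0 - B| + |Y1 + B|) with hC0
      have hφu : ∀ p : ℤ × ℤ, u p ≠ 0 → |φ p| ≤ C0 := by
        intro p hup
        obtain ⟨g1, g2, g3, g4⟩ := hF p hup
        have h1 : |p.1| ≤ |X0| + |X1 - d.1| := abs_le_of_between g1 g2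
        have h2 : |p.2| ≤ |Y0 - B| + |Y1 + B| := abs_le_of_between g3 g4
        calc |φ p| ≤ |d'.2 * p.1| + |d'.1 * p.2| := abs_sub _ _
          _ = |d'.2| * |p.1| + |d'.1| * |p.2| := by rw [abs_mul, abs_mul]
          _ ≤ C0 := by
              rw [hC0]
              have := abs_nonneg d'.2
              have := abs_nonneg d'.1
              nlinarith [abs_nonneg p.1, abs_nonneg p.2]
      have hφline : ∀ (q0 : ℤ × ℤ) (t : ℤ), φ (q0 + t • d') = φ q0 := by
        intro q0 t
        have e1 : (q0 + t • d').1 = q0.1 + t * d'.1 := rfl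
        have e2 : (q0 + t • d').2 = q0.2 + t * d'.2 := rfl
        simp only [hφ, e1, e2]
        ring
      have hφd : φ d ≠ 0 := by
        intro hc
        have hne : r ≠ r' := fun he => hrS (he ▸ hr')
        apply hne
        apply rat_eq_of_cross
        have e1 : φ d = r'.num * (r.den : ℤ) - (r'.den : ℤ) * r.num := rfl
        rw [e1] at hc
        linarith
      set m : ℕ := (C0 + |φ p0| + 1).toNat with hm
      have hfar : LS u d' (p0 - (m : ℤ) • d) = 0 := by
        apply finsum_eq_zero_of_forall_eq_zero
        intro t
        by_contra hne
        have hb := hφu _ hne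
        rw [hφline] at hb
        have e3 : φ (p0 - (m : ℤ) • d) = φ p0 - (m : ℤ) * φ d := by
          have e1 : (p0 - (m : ℤ) • d).1 = p0.1 - (m : ℤ) * d.1 := rfl
          have e2 : (p0 - (m : ℤ) • d).2 = p0.2 - (m : ℤ) * d.2 := rfl
          simp only [hφ, e1, e2]
          ring
        rw [e3] at hb
        have h1 : (1 : ℤ) ≤ |φ d| := Int.one_le_abs hφd
        have h3 : |(m : ℤ) * φ d| - |φ p0| ≤ |φ p0 - (m : ℤ) * φ d| := by
          rw [abs_sub_comm (φ p0) ((m : ℤ) * φ d)]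
          exact abs_sub_abs_le_abs_sub _ _
        rw [abs_mul] at h3
        have hm' : C0 + |φ p0| + 1 ≤ (m : ℤ) := by
          rw [hm]
          exact Int.self_le_toNat _
        have habsm : |(m : ℤ)| = (m : ℤ) := abs_of_nonneg (by positivity)
        rw [habsm] at h3
        have habs := abs_le.mp hb
        nlinarith [abs_nonneg (φ p0)]
      rw [hiter m]
      exact hfar
    have hu0 : ∀ p, u p = 0 := by
      apply IH X0 (X1 - d.1) (Y0 - B) (Y1 + B) u hF ?_ hG
      have hsum : ∑ r' ∈ insert r S, ((r'.den : ℤ)) = (r.den : ℤ) + ∑ r' ∈ S, ((r'.den : ℤ)) :=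
        Finset.sum_insert hrS
      rw [hsum] at hx
      have : d.1 = (r.den : ℤ) := rfl
      omega
    have hfin := hB p
    rw [hu0 p, hu0 (p - d)] at hfin
    simpa using hfin

lemma rat_mul_den (r : ℚ) : (r : ℝ) * (r.den : ℝ) = (r.num : ℝ) := by
  have hden : ((r.den : ℝ)) ≠ 0 := by
    have := r.pos; positivity
  rw [Rat.cast_def]
  field_simp

lemma line_param (r : ℚ) (p0 p : ℤ × ℤ) :
    ((p.2 : ℝ) = (r : ℝ) * (p.1 : ℝ) + ((p0.2 : ℝ) - (r : ℝ) * (p0.1 : ℝ))) ↔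
      ∃ t : ℤ, p = p0 + t • (((r.den : ℤ), r.num) : ℤ × ℤ) := by
  have hr := rat_mul_den r
  constructor
  · intro hreal
    have hint : (r.den : ℤ) * (p.2 - p0.2) = r.num * (p.1 - p0.1) := by
      have hR : ((r.den : ℤ) * (p.2 - p0.2) : ℝ) = ((r.num * (p.1 - p0.1) : ℤ) : ℝ) := by
        push_cast
        linear_combination ((r.den : ℝ)) * hreal + ((p.1 : ℝ) - (p0.1 : ℝ)) * hr
      exact_mod_cast hR
    have hdvd : (r.den : ℤ) ∣ (p.1 - p0.1) := by
      apply (den_coprime_num r).dvd_of_dvd_mul_left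
      exact ⟨p.2 - p0.2, hint.symm⟩
    obtain ⟨t, ht⟩ := hdvd
    refine ⟨t, ?_⟩
    have hden0 : ((r.den : ℤ)) ≠ 0 := by
      have := r.pos; positivity
    have hy : p.2 - p0.2 = t * r.num := by
      have h2 : (r.den : ℤ) * (p.2 - p0.2) = (r.den : ℤ) * (t * r.num) := by
        rw [hint, ht]; ring
      exact mul_left_cancel₀ hden0 h2
    have e1 : (p0 + t • (((r.den : ℤ), r.num) : ℤ × ℤ)).1 = p0.1 + t * (r.den : ℤ) := rfl
    have e2 : (p0 + t • (((r.den : ℤ), r.num) : ℤ × ℤ)).2 = p0.2 + t * r.num := rfl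
    apply Prod.ext_iff.mpr
    constructor
    · rw [e1]; linarith [ht]
    · rw [e2]; linarith [hy]
  · rintro ⟨t, rfl⟩
    have e1 : ((p0 + t • (((r.den : ℤ), r.num) : ℤ × ℤ)).1 : ℤ) = p0.1 + t * (r.den : ℤ) := rfl
    have e2 : ((p0 + t • (((r.den : ℤ), r.num) : ℤ × ℤ)).2 : ℤ) = p0.2 + t * r.num := rfl
    rw [e1, e2]
    push_cast
    linear_combination (-(t : ℝ)) * hr

lemma LS_eq_clue (n : ℕ) (f g : ℤ × ℤ → ℝ) (r : ℚ) (p0 : ℤ × ℤ) :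
    LS (fun p => if p ∈ (Finset.Icc (1 : ℤ) n ×ˢ Finset.Icc (1 : ℤ) n) then f p - g p else 0)
      ((r.den : ℤ), r.num) p0
    = clueSum n n (some r) ((p0.2 : ℝ) - (r : ℝ) * (p0.1 : ℝ)) f
      - clueSum n n (some r) ((p0.2 : ℝ) - (r : ℝ) * (p0.1 : ℝ)) g := by
  classical
  set A := Finset.Icc (1 : ℤ) n ×ˢ Finset.Icc (1 : ℤ) n with hA
  set h : ℤ × ℤ → ℝ := fun p => if p ∈ A then f p - g p else 0 with hh
  set d : ℤ × ℤ := ((r.den : ℤ), r.num) with hd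
  set c : ℝ := (p0.2 : ℝ) - (r : ℝ) * (p0.1 : ℝ) with hc
  set E := A.filter (fun p : ℤ × ℤ => (p.2 : ℝ) = (r : ℝ) * (p.1 : ℝ) + c) with hE
  have hd1 : (0 : ℤ) < d.1 := by
    show (0 : ℤ) < (r.den : ℤ); exact_mod_cast r.pos
  have hinj : Function.Injective (fun t : ℤ => p0 + t • d) := by
    intro s t hst
    have h1 : p0.1 + s * d.1 = p0.1 + t * d.1 := congrArg Prod.fst hst
    have h2 : s * d.1 = t * d.1 := by omega
    exact mul_right_cancel₀ (by omega) h2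
  have hmemiff : ∀ q : ℤ × ℤ, h q ≠ 0 →
      (q ∈ Set.range (fun t : ℤ => p0 + t • d) ↔ q ∈ (E : Set (ℤ × ℤ))) := by
    intro q hq
    have hqA : q ∈ A := by
      by_contra hc'
      rw [hh] at hq
      simp only [if_neg hc'] at hq
      exact hq rfl
    simp only [Set.mem_range, Finset.coe_filter, Set.mem_setOf_eq, hE]
    constructor
    · rintro ⟨t, rfl⟩
      exact ⟨hqA, (line_param r p0 _).mpr ⟨t, rfl⟩⟩
    · rintro ⟨-, heq⟩
      obtain ⟨t, ht⟩ := (line_param r p0 q).mp heq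
      exact ⟨t, ht.symm⟩
  have step1 : LS h d p0 = ∑ᶠ q ∈ Set.range (fun t : ℤ => p0 + t • d), h q :=
    (finsum_mem_range hinj).symm
  have hseteq : (Set.range fun t : ℤ => p0 + t • d) ∩ Function.support h
      = (E : Set (ℤ × ℤ)) ∩ Function.support h := by
    ext q
    simp only [Set.mem_inter_iff, Function.mem_support]
    constructor
    · rintro ⟨hq, hs⟩; exact ⟨(hmemiff q hs).mp hq, hs⟩
    · rintro ⟨hq, hs⟩; exact ⟨(hmemiff q hs).mpr hq, hs⟩
  have step2 : ∑ᶠ q ∈ Set.range (fun t : ℤ => p0 + t • d), h q = ∑ᶠ q ∈ (E : Set (ℤ × ℤ)), h q := by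
    rw [← finsum_mem_inter_support h (Set.range fun t : ℤ => p0 + t • d), hseteq,
      finsum_mem_inter_support]
  have step3 : ∑ᶠ q ∈ (E : Set (ℤ × ℤ)), h q = ∑ q ∈ E, h q := finsum_mem_coe_finset h E
  have step4 : ∑ q ∈ E, h q = ∑ q ∈ E, (f q - g q) := by
    apply Finset.sum_congr rfl
    intro q hq
    rw [hh]
    exact if_pos (Finset.mem_of_mem_filter q hq)
  have hclue : ∀ F : ℤ × ℤ → ℝ, clueSum n n (some r) c F = ∑ p ∈ E, F p := by
    intro F
    rw [clueSum, hE, hA]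
  rw [step1, step2, step3, step4, Finset.sum_sub_distrib, hclue f, hclue g]

lemma slopesUpTo_mono {q q' : ℕ} (h : q ≤ q') : slopesUpTo q ⊆ slopesUpTo q' := by
  intro s hs
  rcases hs with hs | ⟨k, h1, h2, h3⟩
  · exact Or.inl hs
  · exact Or.inr ⟨k, h1, le_trans h2 (by exact_mod_cast h), h3⟩

lemma exists_slopes : ∀ q : ℕ, 1 ≤ q →
    ∃ S : Finset ℚ, (∀ r ∈ S, (some r) ∈ slopesUpTo q) ∧
      ((q : ℤ) ^ 2 + 3 * q - 1 ≤ ∑ r ∈ S, (r.den : ℤ)) ∧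
      (∀ r ∈ S, r.den ≤ q ∧ r.num.natAbs ≤ q) := by
  intro q
  induction q with
  | zero => omega
  | succ q IH =>
    intro _
    by_cases hq0 : q = 0
    · subst hq0
      refine ⟨{0, 1, -1}, ?_, ?_, ?_⟩
      · intro s hs
        simp only [Finset.mem_insert, Finset.mem_singleton] at hs
        rcases hs with rfl | rfl | rfl
        · exact Or.inl (Or.inl rfl)
        · refine Or.inr ⟨1, by norm_num, by norm_num, Or.inl (by norm_num)⟩
        · refine Or.inr ⟨-1, by norm_num, by norm_num, Or.inl (by norm_num)⟩
      · have hsum : ∑ r ∈ ({0, 1, -1} : Finset ℚ), ((r.den : ℤ)) = 3 := by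
          rw [Finset.sum_insert (by norm_num), Finset.sum_insert (by norm_num),
            Finset.sum_singleton]
          norm_num
        rw [hsum]
        norm_num
      · intro s hs
        simp only [Finset.mem_insert, Finset.mem_singleton] at hs
        rcases hs with rfl | rfl | rfl <;> norm_num
    · obtain ⟨S, hmemS, hsumS, hinvS⟩ := IH (by omega)
      set k : ℤ := (q : ℤ) + 1 with hk
      have hq1 : 1 ≤ q := by omega
      have hkpos : (0 : ℤ) < k := by omega
      have hkne : k ≠ 0 := by omega
      have hknat : (k.natAbs : ℤ) = k := Int.natAbs_of_nonneg (by omega)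
      have hknat' : k.natAbs = q + 1 := by omega
      have e1den : ((k : ℚ)).den = 1 := Rat.den_intCast k
      have e1num : ((k : ℚ)).num = k := Rat.num_intCast k
      have e2den : (((-k : ℤ) : ℚ)).den = 1 := Rat.den_intCast _
      have e2num : (((-k : ℤ) : ℚ)).num = -k := Rat.num_intCast _
      have e3den : (1 / (k : ℚ)).den = k.natAbs := by
        rw [one_div, Rat.inv_intCast_den, if_neg hkne]
      have e3num : (1 / (k : ℚ)).num = 1 := by
        rw [one_div, Rat.inv_intCast_num]
        exact Int.sign_eq_one_iff_pos.mpr hkpos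
      have e4den : (1 / ((-k : ℤ) : ℚ)).den = k.natAbs := by
        rw [one_div, Rat.inv_intCast_den, if_neg (by omega : (-k : ℤ) ≠ 0), Int.natAbs_neg]
      have e4num : (1 / ((-k : ℤ) : ℚ)).num = -1 := by
        rw [one_div, Rat.inv_intCast_num]
        exact Int.sign_eq_neg_one_iff_neg.mpr (by omega)
      set E1 : ℚ := ((k : ℚ)) with hE1
      set E2 : ℚ := (((-k : ℤ) : ℚ)) with hE2
      set E3 : ℚ := 1 / (k : ℚ) with hE3
      set E4 : ℚ := 1 / ((-k : ℤ) : ℚ) with hE4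
      have hd4 : E4 ∉ S := by
        intro hmem
        have := (hinvS _ hmem).1
        rw [e4den] at this
        omega
      have hd3 : E3 ∉ insert E4 S := by
        simp only [Finset.mem_insert]
        rintro (he | hmem)
        · have := congrArg Rat.num he
          rw [e3num, e4num] at this
          omega
        · have := (hinvS _ hmem).1
          rw [e3den] at this
          omega
      have hd2 : E2 ∉ insert E3 (insert E4 S) := by
        simp only [Finset.mem_insert]
        rintro (he | he | hmem)
        · have := congrArg Rat.den he
          rw [e2den, e3den] at this
          omega
        · have := congrArg Rat.den he
          rw [e2den, e4den] at this
          omega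
        · have := (hinvS _ hmem).2
          rw [e2num] at this
          omega
      have hd1 : E1 ∉ insert E2 (insert E3 (insert E4 S)) := by
        simp only [Finset.mem_insert]
        rintro (he | he | he | hmem)
        · have := congrArg Rat.num he
          rw [e1num, e2num] at this
          omega
        · have := congrArg Rat.den he
          rw [e1den, e3den] at this
          omega
        · have := congrArg Rat.den he
          rw [e1den, e4den] at this
          omega
        · have := (hinvS _ hmem).2
          rw [e1num] at this
          omega
      refine ⟨insert E1 (insert E2 (insert E3 (insert E4 S))), ?_, ?_, ?_⟩
      · intro s hs
        simp only [Finset.mem_insert] at hs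
        have habs : |k| = k := abs_of_pos hkpos
        have habs' : |(-k : ℤ)| = k := by rw [abs_neg]; exact habs
        rcases hs with rfl | rfl | rfl | rfl | hmem
        · exact Or.inr ⟨k, by omega, by push_cast; omega, Or.inl rfl⟩
        · exact Or.inr ⟨-k, by omega, by push_cast; omega, Or.inl rfl⟩
        · exact Or.inr ⟨k, by omega, by push_cast; omega, Or.inr rfl⟩
        · exact Or.inr ⟨-k, by omega, by push_cast; omega, Or.inr rfl⟩
        · exact slopesUpTo_mono (by omega) (hmemS s hmem)
      · rw [Finset.sum_insert hd1, Finset.sum_insert hd2, Finset.sum_insert hd3,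
          Finset.sum_insert hd4, e1den, e2den, e3den, e4den]
        push_cast [hknat']
        push_cast at hsumS
        nlinarith [hsumS]
      · intro s hs
        simp only [Finset.mem_insert] at hs
        rcases hs with rfl | rfl | rfl | rfl | hmem
        · rw [e1den]; constructor; omega; rw [e1num]; omega
        · rw [e2den]; constructor; omega; rw [e2num]; omega
        · rw [e3den]; constructor; omega; rw [e3num]; omega
        · rw [e4den]; constructor; omega; rw [e4num]; omega
        · have := hinvS s hmem; omega

/-- if `n ≤ q² + 3q − 1` then every entry of `I_{n,n}` is uniquely solvable
with respect to `T = {0, ∞} ∪ {k : 1 ≤ |k| ≤ q} ∪ {1/k : 1 ≤ |k| ≤ q}`; equivalently every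
solvable `n × n` RK puzzle with these clue slopes has a unique solution. -/
theorem rk_unique_of_le (n q : ℕ) (hn : 0 < n) (hq : 0 < q)
    (hnq : n ≤ q ^ 2 + 3 * q - 1) :
    ∀ f g : ℤ × ℤ → ℝ, ClueEquiv n n (slopesUpTo q) f g →
      ∀ p : ℤ × ℤ, 1 ≤ p.1 → p.1 ≤ (n : ℤ) → 1 ≤ p.2 → p.2 ≤ (n : ℤ) → f p = g p := by
  intro f g hcl p hp1 hp2 hp3 hp4
  obtain ⟨S, hmem, hsum, -⟩ := exists_slopes q hq
  classical
  set h : ℤ × ℤ → ℝ :=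
    fun p => if p ∈ (Finset.Icc (1 : ℤ) n ×ˢ Finset.Icc (1 : ℤ) n) then f p - g p else 0 with hh
  have hbox : InBox h 1 n 1 n := by
    intro p hp
    by_cases hmem' : p ∈ (Finset.Icc (1 : ℤ) n ×ˢ Finset.Icc (1 : ℤ) n)
    · rw [Finset.mem_product, Finset.mem_Icc, Finset.mem_Icc] at hmem'
      exact ⟨hmem'.1.1, hmem'.1.2, hmem'.2.1, hmem'.2.2⟩
    · exfalso
      apply hp
      simp only [hh, if_neg hmem']
  have hline : ∀ r ∈ S, ∀ p0 : ℤ × ℤ, LS h ((r.den : ℤ), r.num) p0 = 0 := by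
    intro r hr p0
    rw [hh, LS_eq_clue n f g r p0,
      hcl (some r) (hmem r hr) ((p0.2 : ℝ) - (r : ℝ) * (p0.1 : ℝ)), sub_self]
  have hcast : (n : ℤ) ≤ (q : ℤ) ^ 2 + 3 * q - 1 := by
    have h1 : 1 ≤ q ^ 2 + 3 * q := by nlinarith
    have h2 : (n : ℤ) ≤ ((q ^ 2 + 3 * q - 1 : ℕ) : ℤ) := by exact_mod_cast hnq
    rw [Nat.cast_sub h1] at h2
    push_cast at h2
    linarith
  have hzero := ghost_zero S 1 n 1 n h hbox (by linarith) hline p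
  have hpA : p ∈ (Finset.Icc (1 : ℤ) n ×ˢ Finset.Icc (1 : ℤ) n) := by
    rw [Finset.mem_product, Finset.mem_Icc, Finset.mem_Icc]
    exact ⟨⟨hp1, hp2⟩, hp3, hp4⟩
  have hfg : f p - g p = 0 := by
    simpa only [hh, if_pos hpA] using hzero
  linarith
end

section
/- For all positive integers n and m, r_{n,m} ⪯ r_{n+1,m} and r_{n,m} ⪯ r_{n,m+1}. -/
open Classical

/-- The enumeration `σ` of the slope set `S = ℤ ∪ {1/k : k ≠ 0} ∪ {∞}` realizing the order
`0 ≺ ∞ ≺ −1 ≺ 1 ≺ −1/2 ≺ −2 ≺ 1/2 ≺ 2 ≺ −1/3 ≺ −3 ≺ 1/3 ≺ 3 ≺ ⋯`: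
`σ 0 = 0`, `σ 1 = ∞`, `σ 2 = −1`, `σ 3 = 1`, and for `q ≥ 2`,
`σ (4q−4) = −1/q`, `σ (4q−3) = −q`, `σ (4q−2) = 1/q`, `σ (4q−1) = q`. -/
def sigmaSlope : ℕ → Slope
  | 0 => some 0
  | 1 => none
  | 2 => some (-1)
  | 3 => some 1
  | (a + 4) =>
    let q : ℚ := ((a / 4 + 2 : ℕ) : ℚ)
    match a % 4 with
    | 0 => some (-(1 / q))
    | 1 => some (-q)
    | 2 => some (1 / q)
    | _ => some q

/-- `C_{σ(a)} = {t ∈ S : t ⪯ σ(a)}`, the set of the first `a + 1` slopes. -/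
def CSet (a : ℕ) : Set Slope := sigmaSlope '' Set.Iic a

/-- Either every entry of the first row or every entry of the last row of `I_{n,m}` is
uniquely solvable with respect to `C_{σ(a)}`. -/
def RowOK (n m a : ℕ) : Prop :=
  (∀ i : ℤ, 1 ≤ i → i ≤ (n : ℤ) → UniqSolv n m (CSet a) (i, 1)) ∨
  (∀ i : ℤ, 1 ≤ i → i ≤ (n : ℤ) → UniqSolv n m (CSet a) (i, (m : ℤ)))

/-- Either every entry of the first column or every entry of the last column of `I_{n,m}` is
uniquely solvable with respect to `C_{σ(a)}`. -/
def ColOK (n m a : ℕ) : Prop :=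
  (∀ j : ℤ, 1 ≤ j → j ≤ (m : ℤ) → UniqSolv n m (CSet a) (1, j)) ∨
  (∀ j : ℤ, 1 ≤ j → j ≤ (m : ℤ) → UniqSolv n m (CSet a) ((n : ℤ), j))

/-- The index (in the enumeration `σ`) of the invariant `r_{n,m}`: the ⪯-least `s ∈ S` such
that either the first or the last row of `I_{n,m}` is uniquely solvable w.r.t. `C_s`. -/
noncomputable def rInv (n m : ℕ) : ℕ := sInf {a | RowOK n m a}

/-- The index of the invariant `c_{n,m}`: the ⪯-least `s ∈ S` such that either the first or
the last column of `I_{n,m}` is uniquely solvable w.r.t. `C_s`. -/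
noncomputable def cInv (n m : ℕ) : ℕ := sInf {a | ColOK n m a}

/-- The index of the invariant `s_{n,m} = min{r_{n,m}, c_{n,m}}`. -/
noncomputable def sInv (n m : ℕ) : ℕ := min (rInv n m) (cInv n m)

/-- The index of the invariant `k_{n,m}`: the ⪯-least `s ∈ S` such that every entry of
`I_{n,m}` is uniquely solvable w.r.t. `C_s`. -/
noncomputable def kInv (n m : ℕ) : ℕ :=
  sInf {a | ∀ p : ℤ × ℤ, 1 ≤ p.1 → p.1 ≤ (n : ℤ) → 1 ≤ p.2 → p.2 ≤ (m : ℤ) →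
    UniqSolv n m (CSet a) p}

/-- The index of the invariant `b_{n,m}`: the ⪯-least `s ∈ S` such that every entry of the
border `B_{n,m} = ({1,n} × I_m) ∪ (I_n × {1,m})` is uniquely solvable w.r.t. `C_s`. -/
noncomputable def bInv (n m : ℕ) : ℕ :=
  sInf {a | ∀ p : ℤ × ℤ, 1 ≤ p.1 → p.1 ≤ (n : ℤ) → 1 ≤ p.2 → p.2 ≤ (m : ℤ) →
    (p.1 = 1 ∨ p.1 = (n : ℤ) ∨ p.2 = 1 ∨ p.2 = (m : ℤ)) →
    UniqSolv n m (CSet a) p}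

/-- Auxiliary: the steep slope `m+2` uniquely solves every entry. -/
lemma steep_uniq (n m : ℕ) (p : ℤ × ℤ) (hp1 : 1 ≤ p.1) (hp2 : p.1 ≤ (n : ℤ))
    (hp3 : 1 ≤ p.2) (hp4 : p.2 ≤ (m : ℤ)) : UniqSolv n m (CSet (4 * m + 7)) p := by
  intro f g hfg
  have hσ : sigmaSlope (4 * m + 7) = some ((m : ℚ) + 2) := by
    show sigmaSlope ((4 * m + 3) + 4) = some ((m : ℚ) + 2)
    have h1 : (4 * m + 3) % 4 = 3 := by omega
    have h2 : (4 * m + 3) / 4 = m := by omega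
    simp [sigmaSlope, h1, h2]
  have hmem : (some ((m : ℚ) + 2) : Slope) ∈ CSet (4 * m + 7) :=
    ⟨4 * m + 7, by simp [Set.mem_Iic], hσ⟩
  have h := hfg _ hmem ((p.2 : ℝ) - ((m : ℝ) + 2) * (p.1 : ℝ))
  unfold clueSum at h
  have hset : ((Finset.Icc (1 : ℤ) n ×ˢ Finset.Icc (1 : ℤ) m).filter
      (fun q => match (some ((m : ℚ) + 2) : Slope) with
        | none => (q.1 : ℝ) = ((p.2 : ℝ) - ((m : ℝ) + 2) * (p.1 : ℝ))
        | some r => (q.2 : ℝ) = (r : ℝ) * (q.1 : ℝ) + ((p.2 : ℝ) - ((m : ℝ) + 2) * (p.1 : ℝ)))) = {p} := by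
    ext q
    simp only [Finset.mem_filter, Finset.mem_product, Finset.mem_Icc, Finset.mem_singleton]
    constructor
    · rintro ⟨⟨⟨hx1, hx2⟩, hy1, hy2⟩, hline⟩
      have hline' : (q.2 : ℝ) = ((m : ℝ) + 2) * (q.1 : ℝ) + ((p.2 : ℝ) - ((m : ℝ) + 2) * (p.1 : ℝ)) := by
        push_cast at hline ⊢; linarith
      have hR : ((q.2 - p.2 : ℤ) : ℝ) = (((m : ℤ) + 2 : ℤ) : ℝ) * ((q.1 - p.1 : ℤ) : ℝ) := by
        push_cast; linarith
      have hZ : q.2 - p.2 = ((m : ℤ) + 2) * (q.1 - p.1) := by exact_mod_cast hR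
      have hx : q.1 = p.1 := by
        rcases lt_trichotomy q.1 p.1 with hlt | heq | hgt
        · exfalso
          nlinarith [mul_nonneg (show (0:ℤ) ≤ (m : ℤ) + 2 by positivity)
            (show (0:ℤ) ≤ p.1 - q.1 - 1 by omega)]
        · exact heq
        · exfalso
          nlinarith [mul_nonneg (show (0:ℤ) ≤ (m : ℤ) + 2 by positivity)
            (show (0:ℤ) ≤ q.1 - p.1 - 1 by omega)]
      have hy : q.2 = p.2 := by
        rw [hx] at hZ; simp at hZ; omega
      exact Prod.ext hx hy
    · rintro rfl
      refine ⟨⟨⟨hp1, hp2⟩, hp3, hp4⟩, ?_⟩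
      push_cast; ring
  rw [hset] at h
  simpa using h

lemma rowOK_steep (n m : ℕ) (hm : 0 < m) : RowOK n m (4 * m + 7) :=
  Or.inl fun i hi1 hi2 => steep_uniq n m (i, 1) hi1 hi2 le_rfl
    (by show (1 : ℤ) ≤ (m : ℤ); omega)

lemma padRight_key (n m : ℕ) (P : ℤ × ℤ → Prop) (f g : ℤ × ℤ → ℝ)
    (hc : ∑ p ∈ (Finset.Icc (1 : ℤ) n ×ˢ Finset.Icc (1 : ℤ) m).filter P, (f p - g p) = 0) :
    ∑ p ∈ (Finset.Icc (1 : ℤ) ((n + 1 : ℕ) : ℤ) ×ˢ Finset.Icc (1 : ℤ) m).filter P,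
      (f p - (if p.1 ≤ (n : ℤ) then g p else f p)) = 0 := by
  have hsub : (Finset.Icc (1 : ℤ) n ×ˢ Finset.Icc (1 : ℤ) m).filter P ⊆
      (Finset.Icc (1 : ℤ) ((n + 1 : ℕ) : ℤ) ×ˢ Finset.Icc (1 : ℤ) m).filter P := by
    intro p hp
    simp only [Finset.mem_filter, Finset.mem_product, Finset.mem_Icc] at hp ⊢
    refine ⟨⟨⟨hp.1.1.1, by push_cast; omega⟩, hp.1.2⟩, hp.2⟩
  have h1 := Finset.sum_subset (f := fun p => f p - (if p.1 ≤ (n : ℤ) then g p else f p)) hsub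
    (by
      intro p hpb hps
      simp only [Finset.mem_filter, Finset.mem_product, Finset.mem_Icc] at hpb hps
      have hnot : ¬ p.1 ≤ (n : ℤ) := by
        intro hle
        exact absurd ⟨⟨⟨hpb.1.1.1, hle⟩, hpb.1.2⟩, hpb.2⟩ hps
      simp only [if_neg hnot, sub_self])
  rw [← h1, ← hc]
  apply Finset.sum_congr rfl
  intro p hp
  simp only [Finset.mem_filter, Finset.mem_product, Finset.mem_Icc] at hp
  show f p - (if p.1 ≤ (n : ℤ) then g p else f p) = f p - g p
  rw [if_pos hp.1.1.2]

lemma padTop_key (n m : ℕ) (P : ℤ × ℤ → Prop) (f g : ℤ × ℤ → ℝ)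
    (hc : ∑ p ∈ (Finset.Icc (1 : ℤ) n ×ˢ Finset.Icc (1 : ℤ) m).filter P, (f p - g p) = 0) :
    ∑ p ∈ (Finset.Icc (1 : ℤ) n ×ˢ Finset.Icc (1 : ℤ) ((m + 1 : ℕ) : ℤ)).filter P,
      (f p - (if p.2 ≤ (m : ℤ) then g p else f p)) = 0 := by
  have hsub : (Finset.Icc (1 : ℤ) n ×ˢ Finset.Icc (1 : ℤ) m).filter P ⊆
      (Finset.Icc (1 : ℤ) n ×ˢ Finset.Icc (1 : ℤ) ((m + 1 : ℕ) : ℤ)).filter P := by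
    intro p hp
    simp only [Finset.mem_filter, Finset.mem_product, Finset.mem_Icc] at hp ⊢
    refine ⟨⟨hp.1.1, ⟨hp.1.2.1, by push_cast; omega⟩⟩, hp.2⟩
  have h1 := Finset.sum_subset (f := fun p => f p - (if p.2 ≤ (m : ℤ) then g p else f p)) hsub
    (by
      intro p hpb hps
      simp only [Finset.mem_filter, Finset.mem_product, Finset.mem_Icc] at hpb hps
      have hnot : ¬ p.2 ≤ (m : ℤ) := by
        intro hle
        exact absurd ⟨⟨hpb.1.1, ⟨hpb.1.2.1, hle⟩⟩, hpb.2⟩ hps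
      simp only [if_neg hnot, sub_self])
  rw [← h1, ← hc]
  apply Finset.sum_congr rfl
  intro p hp
  simp only [Finset.mem_filter, Finset.mem_product, Finset.mem_Icc] at hp
  show f p - (if p.2 ≤ (m : ℤ) then g p else f p) = f p - g p
  rw [if_pos hp.1.2.2]

lemma shiftUp_key (n m : ℕ) (P P' : ℤ × ℤ → Prop) (f g : ℤ × ℤ → ℝ)
    (hPP : ∀ q : ℤ × ℤ, P' q ↔ P (q.1, q.2 + 1))
    (hc : ∑ q ∈ (Finset.Icc (1 : ℤ) n ×ˢ Finset.Icc (1 : ℤ) m).filter P', (f q - g q) = 0) :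
    ∑ p ∈ (Finset.Icc (1 : ℤ) n ×ˢ Finset.Icc (1 : ℤ) ((m + 1 : ℕ) : ℤ)).filter P,
      (f (p.1, p.2 - 1) - (if 2 ≤ p.2 then g (p.1, p.2 - 1) else f (p.1, p.2 - 1))) = 0 := by
  set big := (Finset.Icc (1 : ℤ) n ×ˢ Finset.Icc (1 : ℤ) ((m + 1 : ℕ) : ℤ)).filter P with hbig
  set small := (Finset.Icc (1 : ℤ) n ×ˢ Finset.Icc (1 : ℤ) m).filter P' with hsmall
  set big2 := big.filter (fun p => 2 ≤ p.2) with hbig2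
  have h1 : ∑ p ∈ big2, (f (p.1, p.2 - 1) -
      (if 2 ≤ p.2 then g (p.1, p.2 - 1) else f (p.1, p.2 - 1))) =
      ∑ p ∈ big, (f (p.1, p.2 - 1) -
      (if 2 ≤ p.2 then g (p.1, p.2 - 1) else f (p.1, p.2 - 1))) := by
    apply Finset.sum_subset (Finset.filter_subset _ _)
    intro p hpb hps
    have hnot : ¬ 2 ≤ p.2 := by
      intro h2
      exact hps (Finset.mem_filter.mpr ⟨hpb, h2⟩)
    rw [if_neg hnot, sub_self]
  have h2 : ∑ p ∈ big2, (f (p.1, p.2 - 1) -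
      (if 2 ≤ p.2 then g (p.1, p.2 - 1) else f (p.1, p.2 - 1))) =
      ∑ q ∈ small, (f q - g q) := by
    apply Finset.sum_bij' (i := fun p _ => ((p.1, p.2 - 1) : ℤ × ℤ))
      (j := fun q _ => ((q.1, q.2 + 1) : ℤ × ℤ))
    · intro p hp
      simp only [hbig2, hbig, Finset.mem_filter, Finset.mem_product, Finset.mem_Icc] at hp
      obtain ⟨⟨⟨hx, hy⟩, hline⟩, h2p⟩ := hp
      simp only [hsmall, Finset.mem_filter, Finset.mem_product, Finset.mem_Icc]
      refine ⟨⟨hx, ?_⟩, ?_⟩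
      · push_cast at hy ⊢; omega
      · rw [hPP]
        simpa using hline
    · intro q hq
      simp only [hsmall, Finset.mem_filter, Finset.mem_product, Finset.mem_Icc] at hq
      obtain ⟨⟨hx, hy⟩, hline⟩ := hq
      rw [hPP] at hline
      simp only [hbig2, hbig, Finset.mem_filter, Finset.mem_product, Finset.mem_Icc]
      exact ⟨⟨⟨hx, ⟨by omega, by push_cast; omega⟩⟩, hline⟩, by omega⟩
    · intro p hp; simp
    · intro q hq; simp
    · intro p hp
      simp only [hbig2, Finset.mem_filter] at hp
      rw [if_pos hp.2]
  rw [← h1, h2, hc]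

/-- Padding a column on the right preserves clue-equivalence. -/
lemma clueEquiv_padRight (n m : ℕ) (T : Set Slope) (f g : ℤ × ℤ → ℝ)
    (h : ClueEquiv n m T f g) :
    ClueEquiv (n + 1) m T f (fun p => if p.1 ≤ (n : ℤ) then g p else f p) := by
  intro s hs c
  have hc := h s hs c
  unfold clueSum at hc ⊢
  rw [← sub_eq_zero, ← Finset.sum_sub_distrib] at hc ⊢
  exact padRight_key n m _ f g hc

/-- Padding a row on the top preserves clue-equivalence. -/
lemma clueEquiv_padTop (n m : ℕ) (T : Set Slope) (f g : ℤ × ℤ → ℝ)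
    (h : ClueEquiv n m T f g) :
    ClueEquiv n (m + 1) T f (fun p => if p.2 ≤ (m : ℤ) then g p else f p) := by
  intro s hs c
  have hc := h s hs c
  unfold clueSum at hc ⊢
  rw [← sub_eq_zero, ← Finset.sum_sub_distrib] at hc ⊢
  exact padTop_key n m _ f g hc

/-- Shifting the grid up by one and padding the bottom row preserves clue-equivalence. -/
lemma clueEquiv_shiftUp (n m : ℕ) (T : Set Slope) (f g : ℤ × ℤ → ℝ)
    (h : ClueEquiv n m T f g) :
    ClueEquiv n (m + 1) T (fun p => f (p.1, p.2 - 1))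
      (fun p => if 2 ≤ p.2 then g (p.1, p.2 - 1) else f (p.1, p.2 - 1)) := by
  intro s hs c
  match s with
  | none =>
    have hc := h none hs c
    unfold clueSum at hc ⊢
    rw [← sub_eq_zero, ← Finset.sum_sub_distrib] at hc ⊢
    exact shiftUp_key n m _ _ f g (fun q => Iff.rfl) hc
  | some r =>
    have hc := h (some r) hs (c - 1)
    unfold clueSum at hc ⊢
    rw [← sub_eq_zero, ← Finset.sum_sub_distrib] at hc ⊢
    refine shiftUp_key n m _ _ f g (fun q => ?_) hc
    show ((q.2 : ℝ) = (r : ℝ) * (q.1 : ℝ) + (c - 1)) ↔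
      (((q.2 + 1 : ℤ) : ℝ) = (r : ℝ) * (q.1 : ℝ) + c)
    push_cast
    constructor <;> intro hh <;> linarith

/-- Restriction: row-solvability for the `(n+1) × m` grid implies it for the `n × m` grid. -/
lemma rowOK_of_right (n m a : ℕ) (h : RowOK (n + 1) m a) : RowOK n m a := by
  rcases h with h | h
  · left
    intro i hi1 hi2 f g hfg
    have heq := h i hi1 (by push_cast; omega) f _ (clueEquiv_padRight n m (CSet a) f g hfg)
    simpa [show i ≤ (n : ℤ) from hi2] using heq
  · right
    intro i hi1 hi2 f g hfg
    have heq := h i hi1 (by push_cast; omega) f _ (clueEquiv_padRight n m (CSet a) f g hfg)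
    simpa [show i ≤ (n : ℤ) from hi2] using heq

/-- Restriction: row-solvability for the `n × (m+1)` grid implies it for the `n × m` grid. -/
lemma rowOK_of_top (n m a : ℕ) (hm : 0 < m) (h : RowOK n (m + 1) a) : RowOK n m a := by
  rcases h with h | h
  · left
    intro i hi1 hi2 f g hfg
    have heq := h i hi1 hi2 f _ (clueEquiv_padTop n m (CSet a) f g hfg)
    simpa [show (1 : ℤ) ≤ (m : ℤ) by omega] using heq
  · right
    intro i hi1 hi2 f g hfg
    have heq := h i hi1 hi2 (fun p => f (p.1, p.2 - 1)) _
      (clueEquiv_shiftUp n m (CSet a) f g hfg)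
    have hcast : (((m + 1 : ℕ)) : ℤ) = (m : ℤ) + 1 := by push_cast; ring
    rw [hcast] at heq
    simp only at heq
    rw [if_pos (show (2 : ℤ) ≤ (m : ℤ) + 1 by omega)] at heq
    simpa using heq

/-- `r_{n,m} ⪯ r_{n+1,m}` and `r_{n,m} ⪯ r_{n,m+1}` (comparison in the order
`⪯` is comparison of indices in the enumeration `σ`). -/
theorem rInv_mono (n m : ℕ) (hn : 0 < n) (hm : 0 < m) :
    rInv n m ≤ rInv (n + 1) m ∧ rInv n m ≤ rInv n (m + 1) := by
  constructor
  · have hne : {a | RowOK (n + 1) m a}.Nonempty := ⟨4 * m + 7, rowOK_steep (n + 1) m hm⟩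
    have hmem : RowOK (n + 1) m (rInv (n + 1) m) := Nat.sInf_mem hne
    exact Nat.sInf_le (rowOK_of_right n m _ hmem)
  · have hne : {a | RowOK n (m + 1) a}.Nonempty :=
      ⟨4 * (m + 1) + 7, rowOK_steep n (m + 1) (by omega)⟩
    have hmem : RowOK n (m + 1) (rInv n (m + 1)) := Nat.sInf_mem hne
    exact Nat.sInf_le (rowOK_of_top n m _ hm hmem)
end

section
/- For all positive integers n and m, c_{n,m} ⪯ c_{n+1,m} and c_{n,m} ⪯ c_{n,m+1}. -/
open Classical

/-- Extension of `f` (supported on the grid `I_{n,m}`) into a larger grid, shifted by `u`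
in the first coordinate. -/
noncomputable def extF (n m : ℕ) (u : ℤ) (f : ℤ × ℤ → ℝ) : ℤ × ℤ → ℝ :=
  fun p => if 1 ≤ p.1 - u ∧ p.1 - u ≤ (n : ℤ) ∧ 1 ≤ p.2 ∧ p.2 ≤ (m : ℤ)
    then f (p.1 - u, p.2) else 0

lemma sum_shift (n m N M : ℕ) (u : ℤ) (hu : 0 ≤ u) (hN : (n : ℤ) + u ≤ (N : ℤ))
    (hM : (m : ℤ) ≤ (M : ℤ)) (f : ℤ × ℤ → ℝ) (P Q : ℤ × ℤ → Prop)
    (hPQ : ∀ p : ℤ × ℤ, P (p.1 + u, p.2) ↔ Q p) :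
    ∑ p ∈ (Finset.Icc (1 : ℤ) N ×ˢ Finset.Icc (1 : ℤ) M).filter P, extF n m u f p
      = ∑ p ∈ (Finset.Icc (1 : ℤ) n ×ˢ Finset.Icc (1 : ℤ) m).filter Q, f p := by
  classical
  rw [← Finset.sum_filter_of_ne
    (p := fun p : ℤ × ℤ => 1 ≤ p.1 - u ∧ p.1 - u ≤ (n : ℤ) ∧ 1 ≤ p.2 ∧ p.2 ≤ (m : ℤ))
    (by
      intro x hx hne
      by_contra hc
      apply hne
      show (if 1 ≤ x.1 - u ∧ x.1 - u ≤ (n : ℤ) ∧ 1 ≤ x.2 ∧ x.2 ≤ (m : ℤ)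
        then f (x.1 - u, x.2) else 0) = 0
      rw [if_neg hc])]
  refine Finset.sum_nbij' (fun p => (p.1 - u, p.2)) (fun p => (p.1 + u, p.2)) ?_ ?_ ?_ ?_ ?_
  · intro a ha
    simp only [Finset.mem_filter, Finset.mem_product, Finset.mem_Icc] at ha ⊢
    obtain ⟨⟨⟨⟨hx1, hx2⟩, hx3, hx4⟩, hP⟩, hR1, hR2, hR3, hR4⟩ := ha
    have ha' : ((a.1 - u) + u, a.2) = a := Prod.ext (by omega) rfl
    refine ⟨⟨⟨hR1, hR2⟩, hR3, hR4⟩, ?_⟩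
    exact (hPQ (a.1 - u, a.2)).mp (by rw [ha']; exact hP)
  · intro a ha
    simp only [Finset.mem_filter, Finset.mem_product, Finset.mem_Icc] at ha ⊢
    obtain ⟨⟨⟨h1, h2⟩, h3, h4⟩, hQ⟩ := ha
    exact ⟨⟨⟨⟨by omega, by omega⟩, by omega, by omega⟩, (hPQ a).mpr hQ⟩,
      by omega, by omega, h3, h4⟩
  · intro a _; simp
  · intro a _; simp
  · intro a ha
    simp only [Finset.mem_filter, Finset.mem_product, Finset.mem_Icc] at ha
    obtain ⟨_, hR⟩ := ha
    simp [extF, hR.1, hR.2.1, hR.2.2.1, hR.2.2.2]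

lemma clueEquiv_extF (n m N M : ℕ) (u : ℤ) (hu : 0 ≤ u) (hN : (n : ℤ) + u ≤ (N : ℤ))
    (hM : (m : ℤ) ≤ (M : ℤ)) (T : Set Slope) (f g : ℤ × ℤ → ℝ)
    (h : ClueEquiv n m T f g) : ClueEquiv N M T (extF n m u f) (extF n m u g) := by
  intro s hs c
  cases s with
  | none =>
      have hf := sum_shift n m N M u hu hN hM f
        (fun p => (p.1 : ℝ) = c) (fun p => (p.1 : ℝ) = c - (u : ℝ))
        (by intro p; push_cast; constructor <;> intro h' <;> linarith)
      have hg := sum_shift n m N M u hu hN hM g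
        (fun p => (p.1 : ℝ) = c) (fun p => (p.1 : ℝ) = c - (u : ℝ))
        (by intro p; push_cast; constructor <;> intro h' <;> linarith)
      have := h none hs (c - (u : ℝ))
      simpa [clueSum, hf, hg] using this
  | some r =>
      have hf := sum_shift n m N M u hu hN hM f
        (fun p => (p.2 : ℝ) = (r : ℝ) * (p.1 : ℝ) + c)
        (fun p => (p.2 : ℝ) = (r : ℝ) * (p.1 : ℝ) + (c + (r : ℝ) * (u : ℝ)))
        (by intro p; push_cast; constructor <;> intro h' <;> linarith [h'])
      have hg := sum_shift n m N M u hu hN hM g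
        (fun p => (p.2 : ℝ) = (r : ℝ) * (p.1 : ℝ) + c)
        (fun p => (p.2 : ℝ) = (r : ℝ) * (p.1 : ℝ) + (c + (r : ℝ) * (u : ℝ)))
        (by intro p; push_cast; constructor <;> intro h' <;> linarith [h'])
      have := h (some r) hs (c + (r : ℝ) * (u : ℝ))
      simpa [clueSum, hf, hg] using this

lemma uniqSolv_of_big (n m N M : ℕ) (u : ℤ) (hu : 0 ≤ u) (hN : (n : ℤ) + u ≤ (N : ℤ))
    (hM : (m : ℤ) ≤ (M : ℤ)) (T : Set Slope) (i j : ℤ)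
    (hp1 : 1 ≤ i) (hp2 : i ≤ (n : ℤ)) (hp3 : 1 ≤ j) (hp4 : j ≤ (m : ℤ))
    (h : UniqSolv N M T (i + u, j)) : UniqSolv n m T (i, j) := by
  intro f g hfg
  have key := h (extF n m u f) (extF n m u g) (clueEquiv_extF n m N M u hu hN hM T f g hfg)
  have hcond : 1 ≤ i + u - u ∧ i + u - u ≤ (n : ℤ) ∧ 1 ≤ j ∧ j ≤ (m : ℤ) :=
    ⟨by omega, by omega, hp3, hp4⟩
  have he : i + u - u = i := by omega
  simp only [extF, hcond, if_true, if_pos hcond, he] at key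
  simpa [hp1, hp2] using key

lemma colOK_of_wide (n m a : ℕ) (hn : 0 < n) (h : ColOK (n + 1) m a) : ColOK n m a := by
  rcases h with h | h
  · left
    intro j hj1 hj2
    refine uniqSolv_of_big n m (n + 1) m 0 le_rfl (by push_cast; omega) le_rfl _ 1 j
      le_rfl (by exact_mod_cast hn) hj1 hj2 ?_
    simpa using h j hj1 hj2
  · right
    intro j hj1 hj2
    refine uniqSolv_of_big n m (n + 1) m 1 (by norm_num) (by push_cast; omega) le_rfl _
      (n : ℤ) j (by exact_mod_cast hn) le_rfl hj1 hj2 ?_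
    have := h j hj1 hj2
    have he : ((n : ℤ) + 1) = ((n + 1 : ℕ) : ℤ) := by push_cast; ring
    rw [he]
    exact this

lemma colOK_of_tall (n m a : ℕ) (hn : 0 < n) (h : ColOK n (m + 1) a) : ColOK n m a := by
  rcases h with h | h
  · left
    intro j hj1 hj2
    refine uniqSolv_of_big n m n (m + 1) 0 le_rfl (by omega) (by push_cast; omega) _ 1 j
      le_rfl (by exact_mod_cast hn) hj1 hj2 ?_
    simpa using h j hj1 (by push_cast; omega)
  · right
    intro j hj1 hj2
    refine uniqSolv_of_big n m n (m + 1) 0 le_rfl (by omega) (by push_cast; omega) _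
      (n : ℤ) j (by exact_mod_cast hn) le_rfl hj1 hj2 ?_
    simpa using h j hj1 (by push_cast; omega)

lemma sigmaSlope_eq (m : ℕ) : sigmaSlope (4 * m + 7) = some ((m : ℚ) + 2) := by
  have h : 4 * m + 7 = (4 * m + 3) + 4 := by omega
  rw [h]
  have h1 : (4 * m + 3) % 4 = 3 := by omega
  have h2 : (4 * m + 3) / 4 = m := by omega
  simp only [sigmaSlope, h1, h2]
  push_cast
  ring_nf

lemma uniqSolv_top (n m : ℕ) (i j : ℤ) (hi1 : 1 ≤ i) (hi2 : i ≤ (n : ℤ))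
    (hj1 : 1 ≤ j) (hj2 : j ≤ (m : ℤ)) :
    UniqSolv n m (CSet (4 * m + 7)) (i, j) := by
  intro f g hfg
  have hmem : (some ((m : ℚ) + 2) : Slope) ∈ CSet (4 * m + 7) :=
    ⟨4 * m + 7, Set.mem_Iic.mpr le_rfl, sigmaSlope_eq m⟩
  have key := hfg _ hmem ((j : ℝ) - ((m : ℝ) + 2) * (i : ℝ))
  have hset : (Finset.Icc (1 : ℤ) n ×ˢ Finset.Icc (1 : ℤ) m).filter
      (fun p => ((p.2 : ℤ) : ℝ) = (((m : ℚ) + 2 : ℚ) : ℝ) * (p.1 : ℝ)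
        + ((j : ℝ) - ((m : ℝ) + 2) * (i : ℝ))) = {(i, j)} := by
    ext p
    simp only [Finset.mem_filter, Finset.mem_product, Finset.mem_Icc, Finset.mem_singleton]
    constructor
    · rintro ⟨⟨⟨h1, h2⟩, h3, h4⟩, hl⟩
      have hr : ((p.2 - j : ℤ) : ℝ) = (((m : ℤ) + 2 : ℤ) : ℝ) * ((p.1 - i : ℤ) : ℝ) := by
        push_cast at hl ⊢
        linarith
      have hz : p.2 - j = ((m : ℤ) + 2) * (p.1 - i) := by exact_mod_cast hr
      have h0 : (0 : ℤ) ≤ (m : ℤ) + 2 := by positivity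
      have hpi : p.1 = i := by
        rcases lt_trichotomy p.1 i with hlt | heq | hgt
        · have hle : p.1 - i ≤ -1 := by omega
          have := mul_le_mul_of_nonneg_left hle h0
          exfalso; linarith
        · exact heq
        · have hle : (1 : ℤ) ≤ p.1 - i := by omega
          have := mul_le_mul_of_nonneg_left hle h0
          exfalso; linarith
      have : p.2 = j := by rw [hpi] at hz; omega
      exact Prod.ext hpi this
    · rintro rfl
      refine ⟨⟨⟨hi1, hi2⟩, hj1, hj2⟩, ?_⟩
      push_cast
      ring
  have : clueSum n m (some ((m : ℚ) + 2)) ((j : ℝ) - ((m : ℝ) + 2) * (i : ℝ)) f = f (i, j) := by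
    rw [clueSum]
    rw [show (Finset.Icc (1 : ℤ) n ×ˢ Finset.Icc (1 : ℤ) m).filter
        (fun p => ((p.2 : ℤ) : ℝ) = (((m : ℚ) + 2 : ℚ) : ℝ) * (p.1 : ℝ)
          + ((j : ℝ) - ((m : ℝ) + 2) * (i : ℝ))) = {(i, j)} from hset]
    simp
  have hg : clueSum n m (some ((m : ℚ) + 2)) ((j : ℝ) - ((m : ℝ) + 2) * (i : ℝ)) g = g (i, j) := by
    rw [clueSum]
    rw [show (Finset.Icc (1 : ℤ) n ×ˢ Finset.Icc (1 : ℤ) m).filter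
        (fun p => ((p.2 : ℤ) : ℝ) = (((m : ℚ) + 2 : ℚ) : ℝ) * (p.1 : ℝ)
          + ((j : ℝ) - ((m : ℝ) + 2) * (i : ℝ))) = {(i, j)} from hset]
    simp
  rw [← this, ← hg]
  exact key

lemma colOK_exists (n m : ℕ) (hn : 0 < n) : ColOK n m (4 * m + 7) := by
  left
  intro j hj1 hj2
  exact uniqSolv_top n m 1 j le_rfl (by exact_mod_cast hn) hj1 hj2

/-- `c_{n,m} ⪯ c_{n+1,m}` and `c_{n,m} ⪯ c_{n,m+1}` (comparison in the order
`⪯` is comparison of indices in the enumeration `σ`). -/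
theorem cInv_mono (n m : ℕ) (hn : 0 < n) (hm : 0 < m) :
    cInv n m ≤ cInv (n + 1) m ∧ cInv n m ≤ cInv n (m + 1) := by
  constructor
  · have hne : ColOK (n + 1) m (4 * m + 7) := colOK_exists (n + 1) m (by omega)
    have hmem : cInv (n + 1) m ∈ {a | ColOK (n + 1) m a} :=
      Nat.sInf_mem ⟨4 * m + 7, hne⟩
    exact Nat.sInf_le (colOK_of_wide n m _ hn hmem)
  · have hne : ColOK n (m + 1) (4 * (m + 1) + 7) := colOK_exists n (m + 1) hn
    have hmem : cInv n (m + 1) ∈ {a | ColOK n (m + 1) a} :=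
      Nat.sInf_mem ⟨4 * (m + 1) + 7, hne⟩
    exact Nat.sInf_le (colOK_of_tall n m _ hn hmem)
end

section
/- For all positive integers n and m, s_{n,m} = k_{n,m}. -/
open Classical

/- ===================== Auxiliary development ===================== -/

section Auxiliary

/-- `h` has zero clue along every line of every slope in `T`. -/
def ZeroClue (n m : ℕ) (T : Set Slope) (h : ℤ × ℤ → ℝ) : Prop :=
  ∀ s ∈ T, ∀ c : ℝ, clueSum n m s c h = 0

lemma clueSum_zero_fun (n m : ℕ) (s : Slope) (c : ℝ) :
    clueSum n m s c (fun _ => 0) = 0 := by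
  unfold clueSum; exact Finset.sum_const_zero

lemma clueSum_sub (n m : ℕ) (s : Slope) (c : ℝ) (f g : ℤ × ℤ → ℝ) :
    clueSum n m s c (fun p => f p - g p) = clueSum n m s c f - clueSum n m s c g := by
  unfold clueSum; rw [Finset.sum_sub_distrib]

lemma uniqSolv_iff (n m : ℕ) (T : Set Slope) (p : ℤ × ℤ) :
    UniqSolv n m T p ↔ ∀ h : ℤ × ℤ → ℝ, ZeroClue n m T h → h p = 0 := by
  constructor
  · intro H h hz
    exact H h (fun _ => 0) (fun s hs c => by rw [hz s hs c, clueSum_zero_fun])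
  · intro H f g hfg
    have hz : ZeroClue n m T (fun q => f q - g q) := fun s hs c => by
      rw [clueSum_sub, hfg s hs c, sub_self]
    have h0 : f p - g p = 0 := H _ hz
    linarith

lemma sum_eq_support {h : ℤ × ℤ → ℝ} {A B : Finset (ℤ × ℤ)}
    (H : ∀ p, h p ≠ 0 → (p ∈ A ↔ p ∈ B)) :
    ∑ p ∈ A, h p = ∑ p ∈ B, h p := by
  have h1 : ∑ p ∈ A ∩ B, h p = ∑ p ∈ A, h p := by
    apply Finset.sum_subset Finset.inter_subset_left
    intro x hx hnx
    by_contra hne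
    exact hnx (Finset.mem_inter.mpr ⟨hx, (H x hne).mp hx⟩)
  have h2 : ∑ p ∈ A ∩ B, h p = ∑ p ∈ B, h p := by
    apply Finset.sum_subset Finset.inter_subset_right
    intro x hx hnx
    by_contra hne
    exact hnx (Finset.mem_inter.mpr ⟨(H x hne).mpr hx, hx⟩)
  rw [← h1, h2]

/-- Vertical shift embedding. -/
def vEmb (t : ℤ) : ℤ × ℤ ↪ ℤ × ℤ :=
  ⟨fun p => (p.1, p.2 + t), by
    intro a b hab
    have hab' : (a.1, a.2 + t) = (b.1, b.2 + t) := hab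
    rw [Prod.mk.injEq] at hab'
    exact Prod.ext hab'.1 (by omega)⟩

/-- Horizontal shift embedding. -/
def hEmb (t : ℤ) : ℤ × ℤ ↪ ℤ × ℤ :=
  ⟨fun p => (p.1 + t, p.2), by
    intro a b hab
    have hab' : (a.1 + t, a.2) = (b.1 + t, b.2) := hab
    rw [Prod.mk.injEq] at hab'
    exact Prod.ext (by omega) hab'.2⟩

lemma clueSum_vshift (n m : ℕ) (t : ℤ) (h : ℤ × ℤ → ℝ)
    (hs : ∀ q : ℤ × ℤ, h q ≠ 0 →
      1 ≤ q.1 ∧ q.1 ≤ (n:ℤ) ∧ 1 ≤ q.2 ∧ q.2 ≤ (m:ℤ) ∧ 1 + t ≤ q.2 ∧ q.2 ≤ (m:ℤ) + t)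
    (s : Slope) (c : ℝ) :
    ∃ c' : ℝ, clueSum n m s c (fun p => h (p.1, p.2 + t)) = clueSum n m s c' h := by
  rcases s with _ | r
  · refine ⟨c, ?_⟩
    show (∑ p ∈ (Finset.Icc (1 : ℤ) n ×ˢ Finset.Icc (1 : ℤ) m).filter
        (fun p => (p.1 : ℝ) = c), h (p.1, p.2 + t))
      = ∑ p ∈ (Finset.Icc (1 : ℤ) n ×ˢ Finset.Icc (1 : ℤ) m).filter
        (fun p => (p.1 : ℝ) = c), h p
    rw [show (∑ p ∈ (Finset.Icc (1 : ℤ) n ×ˢ Finset.Icc (1 : ℤ) m).filter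
        (fun p => (p.1 : ℝ) = c), h (p.1, p.2 + t))
      = ∑ q ∈ ((Finset.Icc (1 : ℤ) n ×ˢ Finset.Icc (1 : ℤ) m).filter
        (fun p => (p.1 : ℝ) = c)).map (vEmb t), h q
      from (Finset.sum_map _ (vEmb t) h).symm]
    apply sum_eq_support
    intro q hq
    obtain ⟨s1, s2, s3, s4, s5, s6⟩ := hs q hq
    simp only [Finset.mem_map, Finset.mem_filter, Finset.mem_product, Finset.mem_Icc]
    constructor
    · rintro ⟨a, ⟨⟨⟨ha1, ha2⟩, ha3, ha4⟩, ha5⟩, hae⟩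
      have hae' : (a.1, a.2 + t) = q := hae
      have he1 : a.1 = q.1 := by rw [← hae']
      refine ⟨⟨⟨by omega, by omega⟩, by omega, by omega⟩, ?_⟩
      rw [← he1]; exact ha5
    · rintro ⟨⟨⟨h1, h2⟩, h3, h4⟩, h5⟩
      refine ⟨(q.1, q.2 - t), ⟨⟨⟨by omega, by omega⟩, by omega, by omega⟩, h5⟩, ?_⟩
      show (q.1, q.2 - t + t) = q
      exact Prod.ext rfl (by omega)
  · refine ⟨c + (t : ℝ), ?_⟩
    show (∑ p ∈ (Finset.Icc (1 : ℤ) n ×ˢ Finset.Icc (1 : ℤ) m).filter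
        (fun p => (p.2 : ℝ) = (r : ℝ) * (p.1 : ℝ) + c), h (p.1, p.2 + t))
      = ∑ p ∈ (Finset.Icc (1 : ℤ) n ×ˢ Finset.Icc (1 : ℤ) m).filter
        (fun p => (p.2 : ℝ) = (r : ℝ) * (p.1 : ℝ) + (c + (t : ℝ))), h p
    rw [show (∑ p ∈ (Finset.Icc (1 : ℤ) n ×ˢ Finset.Icc (1 : ℤ) m).filter
        (fun p => (p.2 : ℝ) = (r : ℝ) * (p.1 : ℝ) + c), h (p.1, p.2 + t))
      = ∑ q ∈ ((Finset.Icc (1 : ℤ) n ×ˢ Finset.Icc (1 : ℤ) m).filter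
        (fun p => (p.2 : ℝ) = (r : ℝ) * (p.1 : ℝ) + c)).map (vEmb t), h q
      from (Finset.sum_map _ (vEmb t) h).symm]
    apply sum_eq_support
    intro q hq
    obtain ⟨s1, s2, s3, s4, s5, s6⟩ := hs q hq
    simp only [Finset.mem_map, Finset.mem_filter, Finset.mem_product, Finset.mem_Icc]
    constructor
    · rintro ⟨a, ⟨⟨⟨ha1, ha2⟩, ha3, ha4⟩, ha5⟩, hae⟩
      have hae' : (a.1, a.2 + t) = q := hae
      have he1 : a.1 = q.1 := by rw [← hae']
      have he2 : a.2 + t = q.2 := by rw [← hae'] 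
      refine ⟨⟨⟨by omega, by omega⟩, by omega, by omega⟩, ?_⟩
      have : ((a.2 : ℝ)) = (r : ℝ) * (a.1 : ℝ) + c := ha5
      have hq2 : (q.2 : ℝ) = (a.2 : ℝ) + (t : ℝ) := by
        rw [← he2]; push_cast; ring
      rw [hq2, ← he1, this]; ring
    · rintro ⟨⟨⟨h1, h2⟩, h3, h4⟩, h5⟩
      refine ⟨(q.1, q.2 - t), ⟨⟨⟨by omega, by omega⟩, by omega, by omega⟩, ?_⟩, ?_⟩
      · show ((q.2 - t : ℤ) : ℝ) = (r : ℝ) * (q.1 : ℝ) + c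
        have : (q.2 : ℝ) = (r : ℝ) * (q.1 : ℝ) + (c + (t : ℝ)) := h5
        push_cast
        linarith
      · show (q.1, q.2 - t + t) = q
        exact Prod.ext rfl (by omega)

lemma clueSum_hshift (n m : ℕ) (t : ℤ) (h : ℤ × ℤ → ℝ)
    (hs : ∀ q : ℤ × ℤ, h q ≠ 0 →
      1 ≤ q.1 ∧ q.1 ≤ (n:ℤ) ∧ 1 ≤ q.2 ∧ q.2 ≤ (m:ℤ) ∧ 1 + t ≤ q.1 ∧ q.1 ≤ (n:ℤ) + t)
    (s : Slope) (c : ℝ) :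
    ∃ c' : ℝ, clueSum n m s c (fun p => h (p.1 + t, p.2)) = clueSum n m s c' h := by
  rcases s with _ | r
  · refine ⟨c + (t : ℝ), ?_⟩
    show (∑ p ∈ (Finset.Icc (1 : ℤ) n ×ˢ Finset.Icc (1 : ℤ) m).filter
        (fun p => (p.1 : ℝ) = c), h (p.1 + t, p.2))
      = ∑ p ∈ (Finset.Icc (1 : ℤ) n ×ˢ Finset.Icc (1 : ℤ) m).filter
        (fun p => (p.1 : ℝ) = c + (t : ℝ)), h p
    rw [show (∑ p ∈ (Finset.Icc (1 : ℤ) n ×ˢ Finset.Icc (1 : ℤ) m).filter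
        (fun p => (p.1 : ℝ) = c), h (p.1 + t, p.2))
      = ∑ q ∈ ((Finset.Icc (1 : ℤ) n ×ˢ Finset.Icc (1 : ℤ) m).filter
        (fun p => (p.1 : ℝ) = c)).map (hEmb t), h q
      from (Finset.sum_map _ (hEmb t) h).symm]
    apply sum_eq_support
    intro q hq
    obtain ⟨s1, s2, s3, s4, s5, s6⟩ := hs q hq
    simp only [Finset.mem_map, Finset.mem_filter, Finset.mem_product, Finset.mem_Icc]
    constructor
    · rintro ⟨a, ⟨⟨⟨ha1, ha2⟩, ha3, ha4⟩, ha5⟩, hae⟩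
      have hae' : (a.1 + t, a.2) = q := hae
      have he1 : a.1 + t = q.1 := by rw [← hae']
      refine ⟨⟨⟨by omega, by omega⟩, by omega, by omega⟩, ?_⟩
      have : (q.1 : ℝ) = (a.1 : ℝ) + (t : ℝ) := by rw [← he1]; push_cast; ring
      rw [this, ha5]
    · rintro ⟨⟨⟨h1, h2⟩, h3, h4⟩, h5⟩
      refine ⟨(q.1 - t, q.2), ⟨⟨⟨by omega, by omega⟩, by omega, by omega⟩, ?_⟩, ?_⟩
      · show ((q.1 - t : ℤ) : ℝ) = c
        have : (q.1 : ℝ) = c + (t : ℝ) := h5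
        push_cast; linarith
      · show (q.1 - t + t, q.2) = q
        exact Prod.ext (by omega) rfl
  · refine ⟨c - (r : ℝ) * (t : ℝ), ?_⟩
    show (∑ p ∈ (Finset.Icc (1 : ℤ) n ×ˢ Finset.Icc (1 : ℤ) m).filter
        (fun p => (p.2 : ℝ) = (r : ℝ) * (p.1 : ℝ) + c), h (p.1 + t, p.2))
      = ∑ p ∈ (Finset.Icc (1 : ℤ) n ×ˢ Finset.Icc (1 : ℤ) m).filter
        (fun p => (p.2 : ℝ) = (r : ℝ) * (p.1 : ℝ) + (c - (r : ℝ) * (t : ℝ))), h p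
    rw [show (∑ p ∈ (Finset.Icc (1 : ℤ) n ×ˢ Finset.Icc (1 : ℤ) m).filter
        (fun p => (p.2 : ℝ) = (r : ℝ) * (p.1 : ℝ) + c), h (p.1 + t, p.2))
      = ∑ q ∈ ((Finset.Icc (1 : ℤ) n ×ˢ Finset.Icc (1 : ℤ) m).filter
        (fun p => (p.2 : ℝ) = (r : ℝ) * (p.1 : ℝ) + c)).map (hEmb t), h q
      from (Finset.sum_map _ (hEmb t) h).symm]
    apply sum_eq_support
    intro q hq
    obtain ⟨s1, s2, s3, s4, s5, s6⟩ := hs q hq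
    simp only [Finset.mem_map, Finset.mem_filter, Finset.mem_product, Finset.mem_Icc]
    constructor
    · rintro ⟨a, ⟨⟨⟨ha1, ha2⟩, ha3, ha4⟩, ha5⟩, hae⟩
      have hae' : (a.1 + t, a.2) = q := hae
      have he1 : a.1 + t = q.1 := by rw [← hae']
      have he2 : a.2 = q.2 := by rw [← hae'] 
      refine ⟨⟨⟨by omega, by omega⟩, by omega, by omega⟩, ?_⟩
      have hv : ((a.2 : ℝ)) = (r : ℝ) * (a.1 : ℝ) + c := ha5
      have hq1 : (q.1 : ℝ) = (a.1 : ℝ) + (t : ℝ) := by rw [← he1]; push_cast; ring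
      rw [← he2, hq1, hv]; ring
    · rintro ⟨⟨⟨h1, h2⟩, h3, h4⟩, h5⟩
      refine ⟨(q.1 - t, q.2), ⟨⟨⟨by omega, by omega⟩, by omega, by omega⟩, ?_⟩, ?_⟩
      · show ((q.2 : ℤ) : ℝ) = (r : ℝ) * ((q.1 - t : ℤ) : ℝ) + c
        have : (q.2 : ℝ) = (r : ℝ) * (q.1 : ℝ) + (c - (r : ℝ) * (t : ℝ)) := h5
        push_cast
        linarith [this]
      · show (q.1 - t + t, q.2) = q
        exact Prod.ext (by omega) rfl

/-- Restriction of a function to the grid. -/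
def restr (n m : ℕ) (h : ℤ × ℤ → ℝ) : ℤ × ℤ → ℝ :=
  fun p => if 1 ≤ p.1 ∧ p.1 ≤ (n:ℤ) ∧ 1 ≤ p.2 ∧ p.2 ≤ (m:ℤ) then h p else 0

lemma clueSum_restr (n m : ℕ) (s : Slope) (c : ℝ) (h : ℤ × ℤ → ℝ) :
    clueSum n m s c (restr n m h) = clueSum n m s c h := by
  unfold clueSum
  apply Finset.sum_congr rfl
  intro p hp
  rw [Finset.mem_filter, Finset.mem_product, Finset.mem_Icc, Finset.mem_Icc] at hp
  unfold restr
  rw [if_pos ⟨hp.1.1.1, hp.1.1.2, hp.1.2.1, hp.1.2.2⟩]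

lemma bad_all (n m : ℕ) (T : Set Slope) (p : ℤ × ℤ)
    (hp1 : 1 ≤ p.1) (hp2 : p.1 ≤ (n:ℤ)) (hp3 : 1 ≤ p.2) (hp4 : p.2 ≤ (m:ℤ))
    (hbad : ¬ UniqSolv n m T p) :
    (∃ i : ℤ, 1 ≤ i ∧ i ≤ (n:ℤ) ∧ ¬ UniqSolv n m T (i, 1)) ∧
    (∃ i : ℤ, 1 ≤ i ∧ i ≤ (n:ℤ) ∧ ¬ UniqSolv n m T (i, (m:ℤ))) ∧
    (∃ j : ℤ, 1 ≤ j ∧ j ≤ (m:ℤ) ∧ ¬ UniqSolv n m T (1, j)) ∧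
    (∃ j : ℤ, 1 ≤ j ∧ j ≤ (m:ℤ) ∧ ¬ UniqSolv n m T ((n:ℤ), j)) := by
  rw [uniqSolv_iff] at hbad
  push_neg at hbad
  obtain ⟨h0, hz0, hp0⟩ := hbad
  set H := restr n m h0 with hH
  have hzH : ZeroClue n m T H := fun s hs c => by
    rw [hH, clueSum_restr]; exact hz0 s hs c
  have hHp : H p ≠ 0 := by
    rw [hH]; unfold restr
    rw [if_pos ⟨hp1, hp2, hp3, hp4⟩]; exact hp0
  have hsupp : ∀ q : ℤ × ℤ, H q ≠ 0 →
      1 ≤ q.1 ∧ q.1 ≤ (n:ℤ) ∧ 1 ≤ q.2 ∧ q.2 ≤ (m:ℤ) := by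
    intro q hq
    by_contra hc
    exact hq (by rw [hH]; unfold restr; rw [if_neg hc])
  have hinh : ∃ j : ℤ, ∃ i : ℤ, H (i, j) ≠ 0 :=
    ⟨p.2, p.1, by rwa [Prod.mk.eta]⟩
  have hinh' : ∃ i : ℤ, ∃ j : ℤ, H (i, j) ≠ 0 :=
    ⟨p.1, p.2, by rwa [Prod.mk.eta]⟩
  refine ⟨?_, ?_, ?_, ?_⟩
  · -- first row
    obtain ⟨j0, ⟨i0, hi0⟩, hle⟩ :=
      Int.exists_least_of_bdd (P := fun j => ∃ i, H (i, j) ≠ 0)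
        ⟨1, fun j ⟨i, hij⟩ => (hsupp (i, j) hij).2.2.1⟩ hinh
    obtain ⟨q1, q2, q3, q4⟩ := hsupp (i0, j0) hi0
    set t := j0 - 1 with ht
    have hsupp' : ∀ q : ℤ × ℤ, H q ≠ 0 →
        1 ≤ q.1 ∧ q.1 ≤ (n:ℤ) ∧ 1 ≤ q.2 ∧ q.2 ≤ (m:ℤ) ∧ 1 + t ≤ q.2 ∧ q.2 ≤ (m:ℤ) + t := by
      intro q hq
      obtain ⟨a1, a2, a3, a4⟩ := hsupp q hq
      have hj : j0 ≤ q.2 := hle q.2 ⟨q.1, by rwa [Prod.mk.eta]⟩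
      exact ⟨a1, a2, a3, a4, by omega, by omega⟩
    refine ⟨i0, q1, q2, ?_⟩
    rw [uniqSolv_iff]
    push_neg
    refine ⟨fun q => H (q.1, q.2 + t), ?_, ?_⟩
    · intro s hs c
      obtain ⟨c', hc'⟩ := clueSum_vshift n m t H hsupp' s c
      rw [hc']; exact hzH s hs c'
    · show H (i0, 1 + t) ≠ 0
      rw [show (1 : ℤ) + t = j0 by omega]; exact hi0
  · -- last row
    obtain ⟨j1, ⟨i1, hi1⟩, hge⟩ :=
      Int.exists_greatest_of_bdd (P := fun j => ∃ i, H (i, j) ≠ 0)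
        ⟨m, fun j ⟨i, hij⟩ => (hsupp (i, j) hij).2.2.2⟩ hinh
    obtain ⟨q1, q2, q3, q4⟩ := hsupp (i1, j1) hi1
    set t := j1 - (m:ℤ) with ht
    have hsupp' : ∀ q : ℤ × ℤ, H q ≠ 0 →
        1 ≤ q.1 ∧ q.1 ≤ (n:ℤ) ∧ 1 ≤ q.2 ∧ q.2 ≤ (m:ℤ) ∧ 1 + t ≤ q.2 ∧ q.2 ≤ (m:ℤ) + t := by
      intro q hq
      obtain ⟨a1, a2, a3, a4⟩ := hsupp q hq
      have hj : q.2 ≤ j1 := hge q.2 ⟨q.1, by rwa [Prod.mk.eta]⟩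
      exact ⟨a1, a2, a3, a4, by omega, by omega⟩
    refine ⟨i1, q1, q2, ?_⟩
    rw [uniqSolv_iff]
    push_neg
    refine ⟨fun q => H (q.1, q.2 + t), ?_, ?_⟩
    · intro s hs c
      obtain ⟨c', hc'⟩ := clueSum_vshift n m t H hsupp' s c
      rw [hc']; exact hzH s hs c'
    · show H (i1, (m:ℤ) + t) ≠ 0
      rw [show (m:ℤ) + t = j1 by omega]; exact hi1
  · -- first column
    obtain ⟨i0, ⟨j0, hj0⟩, hle⟩ :=
      Int.exists_least_of_bdd (P := fun i => ∃ j, H (i, j) ≠ 0)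
        ⟨1, fun i ⟨j, hij⟩ => (hsupp (i, j) hij).1⟩ hinh'
    obtain ⟨q1, q2, q3, q4⟩ := hsupp (i0, j0) hj0
    set t := i0 - 1 with ht
    have hsupp' : ∀ q : ℤ × ℤ, H q ≠ 0 →
        1 ≤ q.1 ∧ q.1 ≤ (n:ℤ) ∧ 1 ≤ q.2 ∧ q.2 ≤ (m:ℤ) ∧ 1 + t ≤ q.1 ∧ q.1 ≤ (n:ℤ) + t := by
      intro q hq
      obtain ⟨a1, a2, a3, a4⟩ := hsupp q hq
      have hi : i0 ≤ q.1 := hle q.1 ⟨q.2, by rwa [Prod.mk.eta]⟩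
      exact ⟨a1, a2, a3, a4, by omega, by omega⟩
    refine ⟨j0, q3, q4, ?_⟩
    rw [uniqSolv_iff]
    push_neg
    refine ⟨fun q => H (q.1 + t, q.2), ?_, ?_⟩
    · intro s hs c
      obtain ⟨c', hc'⟩ := clueSum_hshift n m t H hsupp' s c
      rw [hc']; exact hzH s hs c'
    · show H (1 + t, j0) ≠ 0
      rw [show (1 : ℤ) + t = i0 by omega]; exact hj0
  · -- last column
    obtain ⟨i1, ⟨j1, hj1⟩, hge⟩ :=
      Int.exists_greatest_of_bdd (P := fun i => ∃ j, H (i, j) ≠ 0)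
        ⟨n, fun i ⟨j, hij⟩ => (hsupp (i, j) hij).2.1⟩ hinh'
    obtain ⟨q1, q2, q3, q4⟩ := hsupp (i1, j1) hj1
    set t := i1 - (n:ℤ) with ht
    have hsupp' : ∀ q : ℤ × ℤ, H q ≠ 0 →
        1 ≤ q.1 ∧ q.1 ≤ (n:ℤ) ∧ 1 ≤ q.2 ∧ q.2 ≤ (m:ℤ) ∧ 1 + t ≤ q.1 ∧ q.1 ≤ (n:ℤ) + t := by
      intro q hq
      obtain ⟨a1, a2, a3, a4⟩ := hsupp q hq
      have hi : q.1 ≤ i1 := hge q.1 ⟨q.2, by rwa [Prod.mk.eta]⟩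
      exact ⟨a1, a2, a3, a4, by omega, by omega⟩
    refine ⟨j1, q3, q4, ?_⟩
    rw [uniqSolv_iff]
    push_neg
    refine ⟨fun q => H (q.1 + t, q.2), ?_, ?_⟩
    · intro s hs c
      obtain ⟨c', hc'⟩ := clueSum_hshift n m t H hsupp' s c
      rw [hc']; exact hzH s hs c'
    · show H ((n:ℤ) + t, j1) ≠ 0
      rw [show (n:ℤ) + t = i1 by omega]; exact hj1

end Auxiliary

/-- `s_{n,m} = k_{n,m}`. -/
theorem sInv_eq_kInv (n m : ℕ) (hn : 0 < n) (hm : 0 < m) :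
    sInv n m = kInv n m := by
  have hrow : {a : ℕ | RowOK n m a}
      = {a : ℕ | ∀ p : ℤ × ℤ, 1 ≤ p.1 → p.1 ≤ (n : ℤ) → 1 ≤ p.2 → p.2 ≤ (m : ℤ) →
          UniqSolv n m (CSet a) p} := by
    ext a
    simp only [Set.mem_setOf_eq]
    constructor
    · intro hR
      by_contra hc
      push_neg at hc
      obtain ⟨p, h1, h2, h3, h4, h5⟩ := hc
      obtain ⟨⟨i, hi1, hi2, hbi⟩, ⟨i', hi1', hi2', hbi'⟩, -, -⟩ :=
        bad_all n m (CSet a) p h1 h2 h3 h4 h5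
      rcases hR with hR | hR
      · exact hbi (hR i hi1 hi2)
      · exact hbi' (hR i' hi1' hi2')
    · intro hF
      left
      intro i h1 h2
      exact hF (i, 1) h1 h2 le_rfl (by show (1:ℤ) ≤ (m:ℤ); exact_mod_cast hm)
  have hcol : {a : ℕ | ColOK n m a}
      = {a : ℕ | ∀ p : ℤ × ℤ, 1 ≤ p.1 → p.1 ≤ (n : ℤ) → 1 ≤ p.2 → p.2 ≤ (m : ℤ) →
          UniqSolv n m (CSet a) p} := by
    ext a
    simp only [Set.mem_setOf_eq]
    constructor
    · intro hC
      by_contra hc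
      push_neg at hc
      obtain ⟨p, h1, h2, h3, h4, h5⟩ := hc
      obtain ⟨-, -, ⟨j, hj1, hj2, hbj⟩, ⟨j', hj1', hj2', hbj'⟩⟩ :=
        bad_all n m (CSet a) p h1 h2 h3 h4 h5
      rcases hC with hC | hC
      · exact hbj (hC j hj1 hj2)
      · exact hbj' (hC j' hj1' hj2')
    · intro hF
      left
      intro j h1 h2
      exact hF (1, j) le_rfl (by show (1:ℤ) ≤ (n:ℤ); exact_mod_cast hn) h1 h2
  have hr : rInv n m = kInv n m := by unfold rInv kInv; rw [hrow]
  have hc : cInv n m = kInv n m := by unfold cInv kInv; rw [hcol]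
  unfold sInv
  rw [hr, hc, min_self]
end

section
/- For all positive integers n and m, r_{n,m} = c_{n,m} = k_{n,m} = b_{n,m} = s_{n,m}. -/
open Classical

namespace GhostAux

noncomputable def myGrid (n m : ℕ) : Finset (ℤ × ℤ) :=
  Finset.Icc (1 : ℤ) n ×ˢ Finset.Icc (1 : ℤ) m

lemma mem_myGrid {n m : ℕ} {p : ℤ × ℤ} :
    p ∈ myGrid n m ↔ (1 ≤ p.1 ∧ p.1 ≤ (n : ℤ)) ∧ (1 ≤ p.2 ∧ p.2 ≤ (m : ℤ)) := by
  simp [myGrid, Finset.mem_product, Finset.mem_Icc]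

def lineCond (s : Slope) (c : ℝ) (p : ℤ × ℤ) : Prop :=
  match s with
  | none => (p.1 : ℝ) = c
  | some r => (p.2 : ℝ) = (r : ℝ) * (p.1 : ℝ) + c

lemma clueSum_eq (n m : ℕ) (s : Slope) (c : ℝ) (f : ℤ × ℤ → ℝ) :
    clueSum n m s c f = ∑ p ∈ (myGrid n m).filter (lineCond s c), f p := rfl

lemma clueSum_zero (n m : ℕ) (s : Slope) (c : ℝ) :
    clueSum n m s c (fun _ => (0 : ℝ)) = 0 := by
  rw [clueSum_eq]; exact Finset.sum_const_zero

/-- generic shifted-sum lemma -/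
lemma sum_shift (n m : ℕ) (h : ℤ × ℤ → ℝ) (v : ℤ × ℤ) (L L' : ℤ × ℤ → Prop)
    [DecidablePred L] [DecidablePred L']
    (hLL : ∀ p : ℤ × ℤ, L p ↔ L' (p + v))
    (h1 : ∀ p, h p ≠ 0 → p ∈ myGrid n m)
    (h2 : ∀ p, h p ≠ 0 → p - v ∈ myGrid n m) :
    ∑ p ∈ (myGrid n m).filter L, h (p + v) = ∑ p ∈ (myGrid n m).filter L', h p := by
  classical
  have hinj : ∀ a ∈ (myGrid n m).filter L, ∀ b ∈ (myGrid n m).filter L,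
      a + v = b + v → a = b := by
    intro a _ b _ hab; exact add_left_injective v hab
  have e1 : ∑ p ∈ (myGrid n m).filter L, h (p + v)
      = ∑ q ∈ ((myGrid n m).filter L).image (· + v), h q :=
    (Finset.sum_image hinj).symm
  have e2 : (myGrid n m).filter L = (myGrid n m).filter (fun p => L' (p + v)) :=
    Finset.filter_congr (fun p _ => by simpa using (hLL p))
  have e3 : ((myGrid n m).filter (fun p => L' (p + v))).image (· + v)
      = ((myGrid n m).image (· + v)).filter L' := (Finset.filter_image).symm
  rw [e1, e2, e3]
  set Big : Finset (ℤ × ℤ) := (myGrid n m).image (· + v) ∪ myGrid n m with hBig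
  have s1 : ((myGrid n m).image (· + v)).filter L' ⊆ Big.filter L' :=
    Finset.filter_subset_filter _ Finset.subset_union_left
  have s2 : (myGrid n m).filter L' ⊆ Big.filter L' :=
    Finset.filter_subset_filter _ Finset.subset_union_right
  have z1 : ∀ q ∈ Big.filter L', q ∉ ((myGrid n m).image (· + v)).filter L' → h q = 0 := by
    intro q hq hq'
    by_contra hne
    apply hq'
    refine Finset.mem_filter.mpr ⟨?_, (Finset.mem_filter.mp hq).2⟩
    refine Finset.mem_image.mpr ⟨q - v, h2 q hne, by simp⟩
  have z2 : ∀ q ∈ Big.filter L', q ∉ (myGrid n m).filter L' → h q = 0 := by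
    intro q hq hq'
    by_contra hne
    exact hq' (Finset.mem_filter.mpr ⟨h1 q hne, (Finset.mem_filter.mp hq).2⟩)
  rw [Finset.sum_subset s1 z1, Finset.sum_subset s2 z2]

/-- clue sums of a shifted function equal clue sums of the original along a shifted line -/
lemma clue_shift (n m : ℕ) (s : Slope) (c : ℝ) (h : ℤ × ℤ → ℝ) (v : ℤ × ℤ)
    (h1 : ∀ p, h p ≠ 0 → p ∈ myGrid n m)
    (h2 : ∀ p, h p ≠ 0 → p - v ∈ myGrid n m) :
    ∃ c' : ℝ, clueSum n m s c (fun p => h (p + v)) = clueSum n m s c' h := by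
  cases s with
  | none =>
      refine ⟨c + (v.1 : ℝ), ?_⟩
      rw [clueSum_eq, clueSum_eq]
      refine sum_shift n m h v _ _ ?_ h1 h2
      intro p
      show ((p.1 : ℝ) = c) ↔ (((p + v).1 : ℝ) = c + (v.1 : ℝ))
      have : ((p + v).1 : ℝ) = (p.1 : ℝ) + (v.1 : ℝ) := by push_cast [Prod.fst_add]; ring
      rw [this]; constructor <;> intro hh <;> linarith
  | some r =>
      refine ⟨c + (v.2 : ℝ) - (r : ℝ) * (v.1 : ℝ), ?_⟩
      rw [clueSum_eq, clueSum_eq]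
      refine sum_shift n m h v _ _ ?_ h1 h2
      intro p
      show ((p.2 : ℝ) = (r : ℝ) * (p.1 : ℝ) + c) ↔
        (((p + v).2 : ℝ) = (r : ℝ) * ((p + v).1 : ℝ) + (c + (v.2 : ℝ) - (r : ℝ) * (v.1 : ℝ)))
      have e1 : ((p + v).1 : ℝ) = (p.1 : ℝ) + (v.1 : ℝ) := by push_cast [Prod.fst_add]; ring
      have e2 : ((p + v).2 : ℝ) = (p.2 : ℝ) + (v.2 : ℝ) := by push_cast [Prod.snd_add]; ring
      rw [e1, e2]; constructor <;> intro hh <;> linarith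

/-- A ghost: supported in the grid, all clues (for slopes in `T`) vanish. -/
def IsGhost (n m : ℕ) (T : Set Slope) (h : ℤ × ℤ → ℝ) : Prop :=
  (∀ p, h p ≠ 0 → p ∈ myGrid n m) ∧ ∀ s ∈ T, ∀ c : ℝ, clueSum n m s c h = 0

def Ghost (n m : ℕ) (T : Set Slope) : Prop :=
  ∃ h, IsGhost n m T h ∧ ∃ p, h p ≠ 0

lemma not_uniqSolv_of_ghost {n m : ℕ} {T : Set Slope} {h : ℤ × ℤ → ℝ} {p : ℤ × ℤ}
    (hg : IsGhost n m T h) (hp : h p ≠ 0) : ¬ UniqSolv n m T p := by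
  intro H
  exact hp (H h (fun _ => 0) (fun s hs c => by rw [hg.2 s hs c, clueSum_zero]))

lemma uniqSolv_of_noGhost {n m : ℕ} {T : Set Slope} (hng : ¬ Ghost n m T)
    {p : ℤ × ℤ} (hp : p ∈ myGrid n m) : UniqSolv n m T p := by
  intro f g hfg
  classical
  set h : ℤ × ℤ → ℝ := fun q => if q ∈ myGrid n m then f q - g q else 0 with hh
  have hsupp : ∀ q, h q ≠ 0 → q ∈ myGrid n m := by
    intro q hq; by_contra hq'; exact hq (if_neg hq')
  have hclue : ∀ s ∈ T, ∀ c : ℝ, clueSum n m s c h = 0 := by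
    intro s hs c
    have hsplit : clueSum n m s c h = clueSum n m s c f - clueSum n m s c g := by
      rw [clueSum_eq, clueSum_eq, clueSum_eq, ← Finset.sum_sub_distrib]
      refine Finset.sum_congr rfl ?_
      intro q hq
      have : q ∈ myGrid n m := (Finset.mem_filter.mp hq).1
      simp [hh, this]
    rw [hsplit, hfg s hs c, sub_self]
  have hz : ∀ q, h q = 0 := by
    intro q; by_contra hq
    exact hng ⟨h, ⟨hsupp, hclue⟩, q, hq⟩
  have := hz p
  rw [hh] at this
  simp only [if_pos hp] at this
  linarith

lemma ghost_shift {n m : ℕ} {T : Set Slope} {h : ℤ × ℤ → ℝ}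
    (hg : IsGhost n m T h) (v : ℤ × ℤ)
    (hv : ∀ p, h p ≠ 0 → p - v ∈ myGrid n m) :
    IsGhost n m T (fun p => h (p + v)) := by
  constructor
  · intro p hp
    have := hv (p + v) hp
    simpa using this
  · intro s hs c
    obtain ⟨c', hc'⟩ := clue_shift n m s c h v hg.1 hv
    rw [hc', hg.2 s hs c']

lemma ghost_row1 {n m : ℕ} {T : Set Slope} (hg : Ghost n m T) :
    ∃ i : ℤ, 1 ≤ i ∧ i ≤ (n : ℤ) ∧ ¬ UniqSolv n m T (i, 1) := by
  classical
  obtain ⟨h, hgh, p0, hp0⟩ := hg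
  set S : Finset (ℤ × ℤ) := (myGrid n m).filter (fun p => h p ≠ 0) with hS
  have hSne : S.Nonempty := ⟨p0, Finset.mem_filter.mpr ⟨hgh.1 p0 hp0, hp0⟩⟩
  have hSne2 : (S.image Prod.snd).Nonempty := hSne.image Prod.snd
  set j0 : ℤ := (S.image Prod.snd).min' hSne2 with hj0
  obtain ⟨q0, hq0S, hq0⟩ := Finset.mem_image.mp ((S.image Prod.snd).min'_mem hSne2)
  have hq0g := mem_myGrid.mp ((Finset.mem_filter.mp hq0S).1)
  have hq0ne : h q0 ≠ 0 := (Finset.mem_filter.mp hq0S).2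
  set v : ℤ × ℤ := (0, j0 - 1) with hv
  have hshift : ∀ p, h p ≠ 0 → p - v ∈ myGrid n m := by
    intro p hp
    have hpg := mem_myGrid.mp (hgh.1 p hp)
    have hle : j0 ≤ p.2 := Finset.min'_le _ _
      (Finset.mem_image_of_mem Prod.snd (Finset.mem_filter.mpr ⟨hgh.1 p hp, hp⟩))
    rw [mem_myGrid]
    simp only [hv, Prod.fst_sub, Prod.snd_sub]
    obtain ⟨⟨a1, a2⟩, ⟨a3, a4⟩⟩ := hpg
    obtain ⟨⟨b1, b2⟩, ⟨b3, b4⟩⟩ := hq0g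
    omega
  have hg' := ghost_shift hgh v hshift
  have hq0v : q0 - v = (q0.1, (1 : ℤ)) := by
    rw [Prod.ext_iff]
    simp only [Prod.fst_sub, Prod.snd_sub, hv]
    omega
  have hnz : (fun p => h (p + v)) (q0.1, (1 : ℤ)) ≠ 0 := by
    rw [← hq0v]
    have : q0 - v + v = q0 := by ring
    simpa [this] using hq0ne
  exact ⟨q0.1, hq0g.1.1, hq0g.1.2, not_uniqSolv_of_ghost hg' hnz⟩

lemma ghost_rowm {n m : ℕ} {T : Set Slope} (hg : Ghost n m T) :
    ∃ i : ℤ, 1 ≤ i ∧ i ≤ (n : ℤ) ∧ ¬ UniqSolv n m T (i, (m : ℤ)) := by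
  classical
  obtain ⟨h, hgh, p0, hp0⟩ := hg
  set S : Finset (ℤ × ℤ) := (myGrid n m).filter (fun p => h p ≠ 0) with hS
  have hSne : S.Nonempty := ⟨p0, Finset.mem_filter.mpr ⟨hgh.1 p0 hp0, hp0⟩⟩
  have hSne2 : (S.image Prod.snd).Nonempty := hSne.image Prod.snd
  set j1 : ℤ := (S.image Prod.snd).max' hSne2 with hj1
  obtain ⟨q0, hq0S, hq0⟩ := Finset.mem_image.mp ((S.image Prod.snd).max'_mem hSne2)
  have hq0g := mem_myGrid.mp ((Finset.mem_filter.mp hq0S).1)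
  have hq0ne : h q0 ≠ 0 := (Finset.mem_filter.mp hq0S).2
  set v : ℤ × ℤ := (0, j1 - (m : ℤ)) with hv
  have hshift : ∀ p, h p ≠ 0 → p - v ∈ myGrid n m := by
    intro p hp
    have hpg := mem_myGrid.mp (hgh.1 p hp)
    have hle : p.2 ≤ j1 := Finset.le_max' _ _
      (Finset.mem_image_of_mem Prod.snd (Finset.mem_filter.mpr ⟨hgh.1 p hp, hp⟩))
    rw [mem_myGrid]
    simp only [hv, Prod.fst_sub, Prod.snd_sub]
    obtain ⟨⟨a1, a2⟩, ⟨a3, a4⟩⟩ := hpg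
    obtain ⟨⟨b1, b2⟩, ⟨b3, b4⟩⟩ := hq0g
    omega
  have hg' := ghost_shift hgh v hshift
  have hq0v : q0 - v = (q0.1, (m : ℤ)) := by
    rw [Prod.ext_iff]
    simp only [Prod.fst_sub, Prod.snd_sub, hv]
    omega
  have hnz : (fun p => h (p + v)) (q0.1, (m : ℤ)) ≠ 0 := by
    rw [← hq0v]
    have : q0 - v + v = q0 := by ring
    simpa [this] using hq0ne
  exact ⟨q0.1, hq0g.1.1, hq0g.1.2, not_uniqSolv_of_ghost hg' hnz⟩

lemma ghost_col1 {n m : ℕ} {T : Set Slope} (hg : Ghost n m T) :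
    ∃ j : ℤ, 1 ≤ j ∧ j ≤ (m : ℤ) ∧ ¬ UniqSolv n m T (1, j) := by
  classical
  obtain ⟨h, hgh, p0, hp0⟩ := hg
  set S : Finset (ℤ × ℤ) := (myGrid n m).filter (fun p => h p ≠ 0) with hS
  have hSne : S.Nonempty := ⟨p0, Finset.mem_filter.mpr ⟨hgh.1 p0 hp0, hp0⟩⟩
  have hSne2 : (S.image Prod.fst).Nonempty := hSne.image Prod.fst
  set i0 : ℤ := (S.image Prod.fst).min' hSne2 with hi0
  obtain ⟨q0, hq0S, hq0⟩ := Finset.mem_image.mp ((S.image Prod.fst).min'_mem hSne2)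
  have hq0g := mem_myGrid.mp ((Finset.mem_filter.mp hq0S).1)
  have hq0ne : h q0 ≠ 0 := (Finset.mem_filter.mp hq0S).2
  set v : ℤ × ℤ := (i0 - 1, 0) with hv
  have hshift : ∀ p, h p ≠ 0 → p - v ∈ myGrid n m := by
    intro p hp
    have hpg := mem_myGrid.mp (hgh.1 p hp)
    have hle : i0 ≤ p.1 := Finset.min'_le _ _
      (Finset.mem_image_of_mem Prod.fst (Finset.mem_filter.mpr ⟨hgh.1 p hp, hp⟩))
    rw [mem_myGrid]
    simp only [hv, Prod.fst_sub, Prod.snd_sub]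
    obtain ⟨⟨a1, a2⟩, ⟨a3, a4⟩⟩ := hpg
    obtain ⟨⟨b1, b2⟩, ⟨b3, b4⟩⟩ := hq0g
    omega
  have hg' := ghost_shift hgh v hshift
  have hq0v : q0 - v = ((1 : ℤ), q0.2) := by
    rw [Prod.ext_iff]
    simp only [Prod.fst_sub, Prod.snd_sub, hv]
    omega
  have hnz : (fun p => h (p + v)) ((1 : ℤ), q0.2) ≠ 0 := by
    rw [← hq0v]
    have : q0 - v + v = q0 := by ring
    simpa [this] using hq0ne
  exact ⟨q0.2, hq0g.2.1, hq0g.2.2, not_uniqSolv_of_ghost hg' hnz⟩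

lemma ghost_coln {n m : ℕ} {T : Set Slope} (hg : Ghost n m T) :
    ∃ j : ℤ, 1 ≤ j ∧ j ≤ (m : ℤ) ∧ ¬ UniqSolv n m T ((n : ℤ), j) := by
  classical
  obtain ⟨h, hgh, p0, hp0⟩ := hg
  set S : Finset (ℤ × ℤ) := (myGrid n m).filter (fun p => h p ≠ 0) with hS
  have hSne : S.Nonempty := ⟨p0, Finset.mem_filter.mpr ⟨hgh.1 p0 hp0, hp0⟩⟩
  have hSne2 : (S.image Prod.fst).Nonempty := hSne.image Prod.fst
  set i1 : ℤ := (S.image Prod.fst).max' hSne2 with hi1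
  obtain ⟨q0, hq0S, hq0⟩ := Finset.mem_image.mp ((S.image Prod.fst).max'_mem hSne2)
  have hq0g := mem_myGrid.mp ((Finset.mem_filter.mp hq0S).1)
  have hq0ne : h q0 ≠ 0 := (Finset.mem_filter.mp hq0S).2
  set v : ℤ × ℤ := (i1 - (n : ℤ), 0) with hv
  have hshift : ∀ p, h p ≠ 0 → p - v ∈ myGrid n m := by
    intro p hp
    have hpg := mem_myGrid.mp (hgh.1 p hp)
    have hle : p.1 ≤ i1 := Finset.le_max' _ _
      (Finset.mem_image_of_mem Prod.fst (Finset.mem_filter.mpr ⟨hgh.1 p hp, hp⟩))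
    rw [mem_myGrid]
    simp only [hv, Prod.fst_sub, Prod.snd_sub]
    obtain ⟨⟨a1, a2⟩, ⟨a3, a4⟩⟩ := hpg
    obtain ⟨⟨b1, b2⟩, ⟨b3, b4⟩⟩ := hq0g
    omega
  have hg' := ghost_shift hgh v hshift
  have hq0v : q0 - v = ((n : ℤ), q0.2) := by
    rw [Prod.ext_iff]
    simp only [Prod.fst_sub, Prod.snd_sub, hv]
    omega
  have hnz : (fun p => h (p + v)) ((n : ℤ), q0.2) ≠ 0 := by
    rw [← hq0v]
    have : q0 - v + v = q0 := by ring
    simpa [this] using hq0ne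
  exact ⟨q0.2, hq0g.2.1, hq0g.2.2, not_uniqSolv_of_ghost hg' hnz⟩

lemma all_of_noGhost {n m : ℕ} {T : Set Slope} (hng : ¬ Ghost n m T) :
    ∀ p : ℤ × ℤ, 1 ≤ p.1 → p.1 ≤ (n : ℤ) → 1 ≤ p.2 → p.2 ≤ (m : ℤ) →
      UniqSolv n m T p := fun p h1 h2 h3 h4 =>
  uniqSolv_of_noGhost hng (mem_myGrid.mpr ⟨⟨h1, h2⟩, ⟨h3, h4⟩⟩)

end GhostAux


/-- `r_{n,m} = c_{n,m} = k_{n,m} = b_{n,m} = s_{n,m}`. -/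
theorem invariants_eq (n m : ℕ) (hn : 0 < n) (hm : 0 < m) :
    rInv n m = cInv n m ∧ cInv n m = kInv n m ∧ kInv n m = bInv n m ∧
      bInv n m = sInv n m := by
  open GhostAux in
  have hn' : (1 : ℤ) ≤ (n : ℤ) := by exact_mod_cast hn
  have hm' : (1 : ℤ) ≤ (m : ℤ) := by exact_mod_cast hm
  have hRow : ∀ a : ℕ, RowOK n m a ↔ ¬ GhostAux.Ghost n m (CSet a) := by
    intro a
    constructor
    · rintro (hrow | hrow) hgst
      · obtain ⟨i, hi1, hi2, hns⟩ := GhostAux.ghost_row1 hgst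
        exact hns (hrow i hi1 hi2)
      · obtain ⟨i, hi1, hi2, hns⟩ := GhostAux.ghost_rowm hgst
        exact hns (hrow i hi1 hi2)
    · intro hng
      left
      intro i hi1 hi2
      exact GhostAux.all_of_noGhost hng (i, 1) hi1 hi2 le_rfl hm'
  have hCol : ∀ a : ℕ, ColOK n m a ↔ ¬ GhostAux.Ghost n m (CSet a) := by
    intro a
    constructor
    · rintro (hcol | hcol) hgst
      · obtain ⟨j, hj1, hj2, hns⟩ := GhostAux.ghost_col1 hgst
        exact hns (hcol j hj1 hj2)
      · obtain ⟨j, hj1, hj2, hns⟩ := GhostAux.ghost_coln hgst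
        exact hns (hcol j hj1 hj2)
    · intro hng
      left
      intro j hj1 hj2
      exact GhostAux.all_of_noGhost hng (1, j) le_rfl hn' hj1 hj2
  have hAll : ∀ a : ℕ,
      (∀ p : ℤ × ℤ, 1 ≤ p.1 → p.1 ≤ (n : ℤ) → 1 ≤ p.2 → p.2 ≤ (m : ℤ) →
        UniqSolv n m (CSet a) p) ↔ ¬ GhostAux.Ghost n m (CSet a) := by
    intro a
    constructor
    · intro hall hgst
      obtain ⟨i, hi1, hi2, hns⟩ := GhostAux.ghost_row1 hgst
      exact hns (hall (i, 1) hi1 hi2 le_rfl hm')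
    · exact GhostAux.all_of_noGhost
  have hBrd : ∀ a : ℕ,
      (∀ p : ℤ × ℤ, 1 ≤ p.1 → p.1 ≤ (n : ℤ) → 1 ≤ p.2 → p.2 ≤ (m : ℤ) →
        (p.1 = 1 ∨ p.1 = (n : ℤ) ∨ p.2 = 1 ∨ p.2 = (m : ℤ)) →
        UniqSolv n m (CSet a) p) ↔ ¬ GhostAux.Ghost n m (CSet a) := by
    intro a
    constructor
    · intro hall hgst
      obtain ⟨i, hi1, hi2, hns⟩ := GhostAux.ghost_row1 hgst
      exact hns (hall (i, 1) hi1 hi2 le_rfl hm' (Or.inr (Or.inr (Or.inl rfl))))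
    · intro hng p h1 h2 h3 h4 _
      exact GhostAux.all_of_noGhost hng p h1 h2 h3 h4
  have eR : rInv n m = sInf {a | ¬ GhostAux.Ghost n m (CSet a)} := by
    unfold rInv
    congr 1
    exact Set.ext fun a => hRow a
  have eC : cInv n m = sInf {a | ¬ GhostAux.Ghost n m (CSet a)} := by
    unfold cInv
    congr 1
    exact Set.ext fun a => hCol a
  have eK : kInv n m = sInf {a | ¬ GhostAux.Ghost n m (CSet a)} := by
    unfold kInv
    congr 1
    exact Set.ext fun a => hAll a
  have eB : bInv n m = sInf {a | ¬ GhostAux.Ghost n m (CSet a)} := by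
    unfold bInv
    congr 1
    exact Set.ext fun a => hBrd a
  refine ⟨eR.trans eC.symm, eC.trans eK.symm, eK.trans eB.symm, ?_⟩
  unfold sInv
  rw [eB, eR, eC, min_self]
end

section
/- Let n and q be positive integers and let T be a set of slopes with −1/q ∈ T. Let ω = (w_1, …, w_m) be a sequence of non-negative integers with m ≤ n and ω(1,m) ≤ n, and suppose every entry of J_ω is uniquely solvable with respect to T on I_{n,n}. Let 1 ≤ j ≤ m+1 be such that the point (ω(j,m)+1, j) lies in I_{n,n}. If tq ≥ ω(j, j+t−1) + 1 for all 1 ≤ t ≤ m−j+1, and tq + 1 ≤ ω(j−t, j−1) for all 1 ≤ t ≤ j−1, then the entry (ω(j,m)+1, j) is uniquely solvable with respect to T on I_{n,n}. -/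
open Classical

/-- `ω(i,j) = ∑_{k=i}^{j} w_k` (equal to `0` when `i > j`). -/
def wSum (w : ℕ → ℕ) (i j : ℕ) : ℕ := ∑ k ∈ Finset.Icc i j, w k

lemma wSum_add (w : ℕ → ℕ) (a b c : ℕ) (h1 : a ≤ b + 1) (h2 : b ≤ c) :
    wSum w a b + wSum w (b+1) c = wSum w a c := by
  unfold wSum
  rw [← Finset.sum_union]
  · apply Finset.sum_congr _ (fun _ _ => rfl)
    ext k; simp only [Finset.mem_union, Finset.mem_Icc]; omega
  · rw [Finset.disjoint_left]; intro k hk hk'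
    simp only [Finset.mem_Icc] at hk hk'; omega

lemma wSum_empty (w : ℕ → ℕ) (a b : ℕ) (h : b < a) : wSum w a b = 0 := by
  unfold wSum; rw [Finset.Icc_eq_empty (by omega)]; simp

/-- the basic staircase reduction lemma. Given a slope `−1/q ∈ T` and a
sequence `ω = (w_1, …, w_m)` of non-negative integers with `m ≤ n`, `ω(1,m) ≤ n`, all of
whose staircase region `J_ω = {(x,y) : 1 ≤ y ≤ m, 1 ≤ x ≤ ω(y,m)}` is uniquely solvable,
if `1 ≤ j ≤ m+1`, the point `(ω(j,m)+1, j)` lies in `I_{n,n}`,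
`tq ≥ ω(j, j+t−1) + 1` for `1 ≤ t ≤ m−j+1`, and `tq + 1 ≤ ω(j−t, j−1)` for `1 ≤ t ≤ j−1`,
then the entry `(ω(j,m)+1, j)` is uniquely solvable. -/
theorem staircase_reduction_basic (n q : ℕ) (hn : 0 < n) (hq : 0 < q)
    (T : Set Slope) (hT : some (-(1 / (q : ℚ))) ∈ T)
    (m : ℕ) (w : ℕ → ℕ) (hm : m ≤ n) (hsum : wSum w 1 m ≤ n)
    (hJ : ∀ x y : ℕ, 1 ≤ y → y ≤ m → 1 ≤ x → x ≤ wSum w y m →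
      UniqSolv n n T ((x : ℤ), (y : ℤ)))
    (j : ℕ) (hj1 : 1 ≤ j) (hj2 : j ≤ m + 1)
    (hptx : wSum w j m + 1 ≤ n) (hpty : j ≤ n)
    (hstar : ∀ t : ℕ, 1 ≤ t → t ≤ m + 1 - j → wSum w j (j + t - 1) + 1 ≤ t * q)
    (hstarstar : ∀ t : ℕ, 1 ≤ t → t ≤ j - 1 → t * q + 1 ≤ wSum w (j - t) (j - 1)) :
    UniqSolv n n T (((wSum w j m + 1 : ℕ) : ℤ), (j : ℤ)) := by
  intro f g hfg
  have hqR : (q : ℝ) ≠ 0 := Nat.cast_ne_zero.mpr (by omega)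
  set W : ℕ := wSum w j m with hW
  set X0 : ℤ := ((W + 1 : ℕ) : ℤ) with hX0
  have hX0' : X0 = (W : ℤ) + 1 := by push_cast [hX0]; ring
  set c : ℝ := (j : ℝ) + (X0 : ℝ) / q with hc
  set P : ℤ × ℤ := (X0, (j : ℤ)) with hP
  set S : Finset (ℤ × ℤ) :=
    (Finset.Icc (1 : ℤ) n ×ˢ Finset.Icc (1 : ℤ) n).filter
      (fun p => (p.2 : ℝ) = ((-(1 / (q : ℚ)) : ℚ) : ℝ) * (p.1 : ℝ) + c) with hS
  have hclue := hfg _ hT c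
  have hclue' : ∑ p ∈ S, f p = ∑ p ∈ S, g p := by
    simpa [clueSum, hS] using hclue
  -- characterize the line equation
  have hcast : ((-(1 / (q : ℚ)) : ℚ) : ℝ) = -(1 / (q : ℝ)) := by push_cast; ring
  have hline : ∀ p : ℤ × ℤ,
      ((p.2 : ℝ) = ((-(1 / (q : ℚ)) : ℚ) : ℝ) * (p.1 : ℝ) + c) ↔
      p.1 + (q : ℤ) * p.2 = X0 + (q : ℤ) * (j : ℤ) := by
    intro p
    rw [hcast, hc]
    constructor
    · intro h
      have h2 : (p.1 : ℝ) + (q : ℝ) * (p.2 : ℝ) = (X0 : ℝ) + (q : ℝ) * (j : ℝ) := by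
        rw [h]; field_simp; ring
      exact_mod_cast h2
    · intro h
      have h2 : (p.1 : ℝ) + (q : ℝ) * (p.2 : ℝ) = (X0 : ℝ) + (q : ℝ) * (j : ℝ) := by
        exact_mod_cast h
      field_simp
      linear_combination h2
  have hmemS : ∀ p : ℤ × ℤ, p ∈ S ↔
      (1 ≤ p.1 ∧ p.1 ≤ (n : ℤ)) ∧ (1 ≤ p.2 ∧ p.2 ≤ (n : ℤ)) ∧
      p.1 + (q : ℤ) * p.2 = X0 + (q : ℤ) * (j : ℤ) := by
    intro p
    rw [hS, Finset.mem_filter, Finset.mem_product, Finset.mem_Icc, Finset.mem_Icc, hline]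
    tauto
  have hPS : P ∈ S := by
    rw [hmemS]
    refine ⟨⟨?_, ?_⟩, ⟨?_, ?_⟩, rfl⟩ <;> simp only [hP] <;> omega
  -- every other point of S lies in J_ω
  have hother : ∀ p ∈ S, p ≠ P → f p = g p := by
    intro p hpS hpne
    rw [hmemS] at hpS
    obtain ⟨⟨hx1, hx2⟩, ⟨hy1, hy2⟩, heq⟩ := hpS
    obtain ⟨x, y⟩ := p
    simp only at hx1 hx2 hy1 hy2 heq
    set a : ℕ := x.toNat with ha
    set b : ℕ := y.toNat with hb
    have hax : (a : ℤ) = x := Int.toNat_of_nonneg (by omega)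
    have hby : (b : ℤ) = y := Int.toNat_of_nonneg (by omega)
    rcases lt_trichotomy y (j : ℤ) with hlt | heqy | hgt
    · -- y < j : use hstarstar
      set t : ℕ := j - b with ht
      have ht1 : 1 ≤ t := by omega
      have ht2 : t ≤ j - 1 := by omega
      have hjt : j - t = b := by omega
      have hss := hstarstar t ht1 ht2
      rw [hjt] at hss
      have hsplit := wSum_add w b (j - 1) m (by omega) (by omega)
      rw [show j - 1 + 1 = j by omega] at hsplit
      have htz : (t : ℤ) = (j : ℤ) - y := by omega
      have e3 : (q : ℤ) * ((j : ℤ) - y) = (t : ℤ) * q := by rw [htz]; ring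
      have hssZ : (t : ℤ) * (q : ℤ) + 1 ≤ (wSum w b (j - 1) : ℤ) := by exact_mod_cast hss
      have hsplitZ : (wSum w b (j-1) : ℤ) + (W : ℤ) = (wSum w b m : ℤ) := by
        exact_mod_cast hsplit
      have hxle : x ≤ (wSum w b m : ℤ) := by
        have : x = X0 + (q : ℤ) * ((j : ℤ) - y) := by linarith
        rw [hX0'] at this
        linarith [e3]
      have hgoal : a ≤ wSum w b m := by omega
      have := hJ a b (by omega) (by omega) (by omega) hgoal f g hfg
      rw [hax, hby] at this
      exact this
    · -- y = j : then p = P, contradiction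
      exfalso
      apply hpne
      have : x = X0 := by
        have : (q : ℤ) * y = (q : ℤ) * (j : ℤ) := by rw [heqy]
        linarith
      rw [hP, this, heqy]
    · -- y > j : use hstar
      set s : ℕ := b - j with hs
      have hs1 : 1 ≤ s := by omega
      have hsz : (s : ℤ) = y - (j : ℤ) := by omega
      have e3 : (q : ℤ) * ((j : ℤ) - y) = -((s : ℤ) * q) := by rw [show (j:ℤ) - y = -(s:ℤ) by omega]; ring
      have hxeq : x = X0 + (q : ℤ) * ((j : ℤ) - y) := by linarith
      by_cases hbm : b ≤ m
      · -- in-grid above: use hstar at s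
        have hs2 : s ≤ m + 1 - j := by omega
        have hst := hstar s hs1 hs2
        rw [show j + s - 1 = b - 1 by omega] at hst
        have hsplit := wSum_add w j (b - 1) m (by omega) (by omega)
        rw [show b - 1 + 1 = b by omega] at hsplit
        have hstZ : (wSum w j (b-1) : ℤ) + 1 ≤ (s : ℤ) * q := by exact_mod_cast hst
        have hsplitZ : (wSum w j (b-1) : ℤ) + (wSum w b m : ℤ) = (W : ℤ) := by
          exact_mod_cast hsplit
        have hxle : x ≤ (wSum w b m : ℤ) := by
          rw [hxeq, hX0']
          linarith [e3]
        have hgoal : a ≤ wSum w b m := by omega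
        have := hJ a b (by omega) hbm (by omega) hgoal f g hfg
        rw [hax, hby] at this
        exact this
      · -- above the staircase: contradiction with x ≥ 1
        exfalso
        have hkey : (W : ℤ) + 1 ≤ (s : ℤ) * q := by
          by_cases hjm : j ≤ m
          · have hst := hstar (m + 1 - j) (by omega) (by omega)
            rw [show j + (m + 1 - j) - 1 = m by omega] at hst
            have hstZ : (W : ℤ) + 1 ≤ ((m + 1 - j : ℕ) : ℤ) * q := by exact_mod_cast hst
            have hsge : ((m + 1 - j : ℕ) : ℤ) ≤ (s : ℤ) := by omega
            have : ((m + 1 - j : ℕ) : ℤ) * q ≤ (s : ℤ) * q := by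
              apply mul_le_mul_of_nonneg_right hsge (by positivity)
            linarith
          · have hW0 : W = 0 := wSum_empty w j m (by omega)
            have : (1 : ℤ) * q ≤ (s : ℤ) * q := by
              apply mul_le_mul_of_nonneg_right (by exact_mod_cast hs1) (by positivity)
            rw [hW0]
            push_cast
            have hq1 : (1 : ℤ) ≤ (q : ℤ) := by exact_mod_cast hq
            linarith
        rw [hxeq, hX0'] at hx1
        linarith [e3]
  -- conclude
  have hsplitf : ∑ p ∈ S.erase P, f p + f P = ∑ p ∈ S, f p := Finset.sum_erase_add S f hPS
  have hsplitg : ∑ p ∈ S.erase P, g p + g P = ∑ p ∈ S, g p := Finset.sum_erase_add S g hPS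
  have herase : ∑ p ∈ S.erase P, f p = ∑ p ∈ S.erase P, g p := by
    apply Finset.sum_congr rfl
    intro p hp
    exact hother p (Finset.mem_of_mem_erase hp) (Finset.ne_of_mem_erase hp)
  show f P = g P
  linarith
end

section
/- Let n and q be positive integers and let T be a set of slopes with −1/q ∈ T. Let ω = (w_1, …, w_m) be a sequence of non-negative integers with m ≤ n and ω(1,m) ≤ n, and suppose: (1) there is a positive integer m₀ ≤ m such that w_1 ≥ w_2 ≥ ⋯ ≥ w_{m₀} and w_i ∈ {0,1} for all m₀ < i ≤ m; (2) every entry of J_ω is uniquely solvable with respect to T on I_{n,n}. Let 1 ≤ j ≤ m₀+1 be such that the point (ω(j,m)+1, j) lies in I_{n,n}. If w_j + 1 ≤ q (where w_{m₀+1} is taken as the actual entry when m₀ < m and as 0 when m₀ = m) and, in the case j ≥ 2, also q ≤ w_{j−1} − 1, then the entry (ω(j,m)+1, j) is uniquely solvable with respect to T on I_{n,n}. -/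
open Classical

lemma wSum_eq_zero (w : ℕ → ℕ) {a b : ℕ} (h : b < a) : wSum w a b = 0 := by
  unfold wSum
  rw [Finset.Icc_eq_empty (by omega)]
  simp

lemma wSum_split (w : ℕ → ℕ) {a b : ℕ} (h : a ≤ b) : wSum w a b = w a + wSum w (a + 1) b := by
  unfold wSum
  rw [Finset.Icc_eq_cons_Ioc h, Finset.sum_cons, Finset.Icc_add_one_left_eq_Ioc]

/-- the advanced staircase reduction corollary. Given a slope `−1/q ∈ T` and
a sequence `ω = (w_1, …, w_m)` of non-negative integers with `m ≤ n`, `ω(1,m) ≤ n`, which is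
monotone non-increasing on `w_1, …, w_{m₀}` and has entries in `{0,1}` afterwards, all of
whose staircase region `J_ω` is uniquely solvable, if `1 ≤ j ≤ m₀+1`, the point
`(ω(j,m)+1, j)` lies in `I_{n,n}`, `w_j + 1 ≤ q` (where `w_{m₀+1}` is taken to be `0` when
`m₀ = m`), and `q ≤ w_{j−1} − 1` when `j ≥ 2`, then the entry `(ω(j,m)+1, j)` is uniquely
solvable. -/
theorem staircase_reduction_advanced (n q : ℕ) (hn : 0 < n) (hq : 0 < q)
    (T : Set Slope) (hT : some (-(1 / (q : ℚ))) ∈ T)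
    (m : ℕ) (w : ℕ → ℕ) (hm : m ≤ n) (hsum : wSum w 1 m ≤ n)
    (m₀ : ℕ) (hm₀1 : 1 ≤ m₀) (hm₀2 : m₀ ≤ m)
    (hmono : ∀ i : ℕ, 1 ≤ i → i < m₀ → w (i + 1) ≤ w i)
    (htail : ∀ i : ℕ, m₀ < i → i ≤ m → w i ≤ 1)
    (hJ : ∀ x y : ℕ, 1 ≤ y → y ≤ m → 1 ≤ x → x ≤ wSum w y m →
      UniqSolv n n T ((x : ℤ), (y : ℤ)))
    (j : ℕ) (hj1 : 1 ≤ j) (hj2 : j ≤ m₀ + 1)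
    (hptx : wSum w j m + 1 ≤ n) (hpty : j ≤ n)
    (hwj : (if m₀ = m ∧ j = m₀ + 1 then 0 else w j) + 1 ≤ q)
    (hwj' : 2 ≤ j → q + 1 ≤ w (j - 1)) :
    UniqSolv n n T (((wSum w j m + 1 : ℕ) : ℤ), (j : ℤ)) := by

  -- monotonicity in chain form
  have hmono' : ∀ d a : ℕ, 1 ≤ a → a + d ≤ m₀ → w (a + d) ≤ w a := by
    intro d
    induction d with
    | zero => intro a _ _; simp
    | succ d ih =>
      intro a ha hd
      have h1 : w (a + d + 1) ≤ w (a + d) := hmono (a + d) (by omega) (by omega)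
      have h2 : w (a + d) ≤ w a := ih a ha (by omega)
      have h3 : a + (d + 1) = a + d + 1 := by omega
      rw [h3]
      omega
  have hspec : ¬(m₀ = m ∧ j = m₀ + 1) → w j + 1 ≤ q := by
    intro h; rwa [if_neg h] at hwj
  -- every relevant w i with i ≥ j is at most q
  have hwle : ∀ i : ℕ, j ≤ i → i ≤ m → w i ≤ q := by
    intro i hji him
    by_cases hi : m₀ < i
    · have := htail i hi him; omega
    · have hij : i ≤ m₀ := by omega
      have hns : ¬(m₀ = m ∧ j = m₀ + 1) := by omega
      have h1 : w (j + (i - j)) ≤ w j := hmono' (i - j) j hj1 (by omega)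
      have h2 := hspec hns
      have h3 : j + (i - j) = i := by omega
      rw [h3] at h1
      omega
  -- Lemma A : going down along the line
  have hA : ∀ t : ℕ, 1 ≤ t → wSum w j m + 1 ≤ q * t + wSum w (j + t) m := by
    intro t ht
    induction t, ht using Nat.le_induction with
    | base =>
      have hmul : q * 1 = q := by ring
      by_cases hs : m₀ = m ∧ j = m₀ + 1
      · obtain ⟨hs1, hs2⟩ := hs
        have h0 : wSum w j m = 0 := wSum_eq_zero w (by omega)
        omega
      · have hjm : j ≤ m := by omega
        have hsplit := wSum_split w hjm
        have := hspec hs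
        omega
    | succ t ht ih =>
      have hmul : q * (t + 1) = q * t + q := by ring
      have hidx : j + (t + 1) = j + t + 1 := by omega
      rw [hidx]
      have hstep : wSum w (j + t) m ≤ q + wSum w (j + t + 1) m := by
        by_cases hjt : j + t ≤ m
        · have := wSum_split w hjt
          have := hwle (j + t) (by omega) hjt
          omega
        · have h1 : wSum w (j + t) m = 0 := wSum_eq_zero w (by omega)
          omega
      omega
  -- Lemma B : going up along the line
  have hB : ∀ k : ℕ, 1 ≤ k → k ≤ j - 1 → wSum w j m + 1 + q * k ≤ wSum w (j - k) m := by
    intro k hk1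
    induction k, hk1 using Nat.le_induction with
    | base =>
      intro hk2
      have hj2' : 2 ≤ j := by omega
      have hq1 := hwj' hj2'
      have hmul : q * 1 = q := by ring
      have hjm : j - 1 ≤ m := by omega
      have hsplit := wSum_split w hjm
      have hidx : j - 1 + 1 = j := by omega
      rw [hidx] at hsplit
      omega
    | succ k hk ih =>
      intro hk2
      have hj2' : 2 ≤ j := by omega
      have hq1 := hwj' hj2'
      have ih' := ih (by omega)
      have hmul : q * (k + 1) = q * k + q := by ring
      have hidx1 : 1 ≤ j - (k + 1) := by omega
      have hjm : j - (k + 1) ≤ m := by omega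
      have hsplit := wSum_split w hjm
      have heq : j - (k + 1) + 1 = j - k := by omega
      rw [heq] at hsplit
      have hmm : w (j - (k + 1) + (j - 1 - (j - (k + 1)))) ≤ w (j - (k + 1)) :=
        hmono' (j - 1 - (j - (k + 1))) (j - (k + 1)) hidx1 (by omega)
      have heq2 : j - (k + 1) + (j - 1 - (j - (k + 1))) = j - 1 := by omega
      rw [heq2] at hmm
      omega
  -- set up the line
  intro f g hfg
  have hq0 : (q : ℝ) ≠ 0 := by positivity
  set x₀ : ℕ := wSum w j m + 1 with hx₀
  set c : ℝ := (j : ℝ) + (x₀ : ℝ) / (q : ℝ) with hc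
  have key : ∀ p : ℤ × ℤ,
      ((p.2 : ℝ) = ((-(1 / (q : ℚ)) : ℚ) : ℝ) * (p.1 : ℝ) + c) ↔
        p.1 + (q : ℤ) * p.2 = (x₀ : ℤ) + (q : ℤ) * (j : ℤ) := by
    intro p
    have hcast : ((-(1 / (q : ℚ)) : ℚ) : ℝ) = -(1 / (q : ℝ)) := by push_cast; ring
    rw [hcast, hc, ← Int.cast_inj (α := ℝ)]
    push_cast [hx₀]
    have hform : (-(1 / (q : ℝ)) * (p.1 : ℝ) + ((j : ℝ) + ((wSum w j m : ℝ) + 1) / (q : ℝ)))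
          * (q : ℝ)
        = -(p.1 : ℝ) + (j : ℝ) * (q : ℝ) + ((wSum w j m : ℝ) + 1) := by
      field_simp
      ring
    constructor
    · intro h
      have h2 : (p.2 : ℝ) * (q : ℝ)
          = -(p.1 : ℝ) + (j : ℝ) * (q : ℝ) + ((wSum w j m : ℝ) + 1) := by
        rw [h, hform]
      linarith
    · intro h
      have h2 : (p.2 : ℝ) * (q : ℝ)
          = -(p.1 : ℝ) + (j : ℝ) * (q : ℝ) + ((wSum w j m : ℝ) + 1) := by
        linarith
      exact mul_right_cancel₀ hq0 (h2.trans hform.symm)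
  have hclue : ∑ p ∈ (Finset.Icc (1 : ℤ) (n : ℤ) ×ˢ Finset.Icc (1 : ℤ) (n : ℤ)).filter
        (fun p : ℤ × ℤ => (p.2 : ℝ) = ((-(1 / (q : ℚ)) : ℚ) : ℝ) * (p.1 : ℝ) + c), f p
      = ∑ p ∈ (Finset.Icc (1 : ℤ) (n : ℤ) ×ˢ Finset.Icc (1 : ℤ) (n : ℤ)).filter
        (fun p : ℤ × ℤ => (p.2 : ℝ) = ((-(1 / (q : ℚ)) : ℚ) : ℝ) * (p.1 : ℝ) + c), g p :=
    hfg _ hT c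
  set S := (Finset.Icc (1 : ℤ) (n : ℤ) ×ˢ Finset.Icc (1 : ℤ) (n : ℤ)).filter
      (fun p : ℤ × ℤ => (p.2 : ℝ) = ((-(1 / (q : ℚ)) : ℚ) : ℝ) * (p.1 : ℝ) + c) with hS
  have hPS : (((x₀ : ℕ) : ℤ), (j : ℤ)) ∈ S := by
    rw [hS]
    simp only [Finset.mem_filter, Finset.mem_product, Finset.mem_Icc]
    exact ⟨⟨⟨by omega, by omega⟩, by omega, by omega⟩,
      (key (((x₀ : ℕ) : ℤ), (j : ℤ))).mpr rfl⟩
  have hother : ∀ p ∈ S, p ≠ (((x₀ : ℕ) : ℤ), (j : ℤ)) → f p = g p := by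
    rintro ⟨x, y⟩ hp hne
    rw [hS, Finset.mem_filter, Finset.mem_product, Finset.mem_Icc, Finset.mem_Icc] at hp
    obtain ⟨⟨⟨hx1, hx2⟩, hy1, hy2⟩, hline⟩ := hp
    rw [key] at hline
    simp only at hline
    have ha : ((x.toNat : ℕ) : ℤ) = x := Int.toNat_of_nonneg (by omega)
    have hb : ((y.toNat : ℕ) : ℤ) = y := Int.toNat_of_nonneg (by omega)
    set a : ℕ := x.toNat
    set b : ℕ := y.toNat
    rw [← ha, ← hb] at hline
    have heqN : a + q * b = x₀ + q * j := by exact_mod_cast hline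
    have hbne : b ≠ j := by
      intro hbj
      rw [hbj] at heqN
      apply hne
      have hxx : x = ((x₀ : ℕ) : ℤ) := by omega
      have hyy : y = (j : ℤ) := by omega
      rw [hxx, hyy]
    have hxy : ((x, y) : ℤ × ℤ) = (((a : ℕ) : ℤ), ((b : ℕ) : ℤ)) := by rw [ha, hb]
    rcases Nat.lt_or_ge b j with hbj | hbj
    · -- b < j : use Lemma B with k = j - b
      have hdist : q * j = q * b + q * (j - b) := by
        rw [← Nat.mul_add]
        congr 1
        omega
      have hBk := hB (j - b) (by omega) (by omega)
      have hjb : j - (j - b) = b := by omega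
      rw [hjb] at hBk
      have hbm : b ≤ m := by omega
      have hres := hJ a b (by omega) hbm (by omega) (by omega) f g hfg
      rw [hxy]
      exact hres
    · -- b > j : use Lemma A with t = b - j
      have hbj' : j < b := by omega
      have hdist : q * b = q * j + q * (b - j) := by
        rw [← Nat.mul_add]
        congr 1
        omega
      have hAt := hA (b - j) (by omega)
      have hjb : j + (b - j) = b := by omega
      rw [hjb] at hAt
      have hbm : b ≤ m := by
        by_contra hbm
        have h0 : wSum w b m = 0 := wSum_eq_zero w (by omega)
        omega
      have hres := hJ a b (by omega) hbm (by omega) (by omega) f g hfg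
      rw [hxy]
      exact hres
  rw [← Finset.add_sum_erase S f hPS, ← Finset.add_sum_erase S g hPS] at hclue
  have hrest : ∑ p ∈ S.erase (((x₀ : ℕ) : ℤ), (j : ℤ)), f p
      = ∑ p ∈ S.erase (((x₀ : ℕ) : ℤ), (j : ℤ)), g p :=
    Finset.sum_congr rfl fun p hp =>
      hother p (Finset.mem_of_mem_erase hp) (Finset.ne_of_mem_erase hp)
  show f (((x₀ : ℕ) : ℤ), (j : ℤ)) = g (((x₀ : ℕ) : ℤ), (j : ℤ))
  linarith
end

section
/- Let q ≥ 2 be an integer, let m(q) := q + (q−1)(q+2)/2, and let ω_q = (w^q_1, …, w^q_{m(q)}) be defined by: w^q_i = q+1−i if 1 ≤ i ≤ q; w^q_i = 1 if i = q + (j−1)(j+2)/2 for some integer 2 ≤ j ≤ q; and w^q_i = 0 otherwise. Let n be a positive integer with 2n ≥ q² + 3q − 2, and let T = C_{−q} = {0, ∞} ∪ {k : k ∈ ℤ, 1 ≤ |k| ≤ q−1} ∪ {1/k : k ∈ ℤ, 1 ≤ |k| ≤ q−1} ∪ {−1/q, −q}. Then every entry of J_{ω_q} is uniquely solvable with respect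 to T on I_{n,n}. -/
open Classical

/-- `m(q) = q + (q−1)(q+2)/2`. -/
def mOf (q : ℕ) : ℕ := q + (q - 1) * (q + 2) / 2

/-- The sequence `ω_q`: `w^q_i = q+1−i` for `1 ≤ i ≤ q`, `w^q_i = 1` if
`i = q + (j−1)(j+2)/2` for some `2 ≤ j ≤ q`, and `w^q_i = 0` otherwise. -/
noncomputable def wq (q : ℕ) : ℕ → ℕ := fun i =>
  if 1 ≤ i ∧ i ≤ q then q + 1 - i
  else if ∃ j : ℕ, 2 ≤ j ∧ j ≤ q ∧ i = q + (j - 1) * (j + 2) / 2 then 1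
  else 0

/-- The slope set `C_{−q} = {0, ∞} ∪ {±k, ±1/k : 1 ≤ k ≤ q−1} ∪ {−1/q, −q}`. -/
def CnegQ (q : ℕ) : Set Slope :=
  ({some 0, none} ∪
    {s | ∃ k : ℤ, 1 ≤ |k| ∧ |k| ≤ (q : ℤ) - 1 ∧ (s = some (k : ℚ) ∨ s = some (1 / (k : ℚ)))}) ∪
  {some (-(1 / (q : ℚ))), some (-(q : ℚ))}


section Aux


def Pq (q x y : ℤ) : Prop := 2*y ≤ 2*q + (q-x)*(q+3-x)

def inJq (q : ℤ) (p : ℤ × ℤ) : Prop :=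
  1 ≤ p.1 ∧ 1 ≤ p.2 ∧ ((p.1 ≤ q ∧ Pq q p.1 p.2) ∨ (p.2 ≤ q ∧ Pq q p.2 p.1))

def muq (q : ℤ) (p : ℤ × ℤ) : ℤ :=
  2*(max p.1 p.2) + (min p.1 p.2)*(2*q+2 - min p.1 p.2)

lemma inJq_swap {q : ℤ} {x y : ℤ} : inJq q (x,y) ↔ inJq q (y,x) := by
  unfold inJq; dsimp only; tauto

lemma muq_swap {q x y : ℤ} : muq q (x,y) = muq q (y,x) := by
  unfold muq; dsimp only; rw [max_comm, min_comm]

lemma ordered_of_inJ {q x y : ℤ} (hxy : x ≤ y) (h : inJq q (x,y)) :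
    1 ≤ x ∧ x ≤ q ∧ Pq q x y := by
  obtain ⟨h1, h2, h3 | h3⟩ := h
  · exact ⟨h1, h3.1, h3.2⟩
  · refine ⟨h1, le_trans hxy h3.1, ?_⟩
    have hxq : x ≤ q := le_trans hxy h3.1
    unfold Pq
    nlinarith [mul_nonneg (by linarith : (0:ℤ) ≤ q - x) (by linarith : (0:ℤ) ≤ q+3-x)]

lemma mu_pos {q x y : ℤ} (h : inJq q (x,y)) : 1 ≤ muq q (x,y) := by
  have h1 := h.1
  have h2 := h.2.1
  have hminq : min x y ≤ q := by
    rcases le_total x y with hxy | hxy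
    · rw [min_eq_left hxy]; exact (ordered_of_inJ hxy h).2.1
    · rw [min_eq_right hxy]
      have := (ordered_of_inJ hxy (inJq_swap.mp h)).2.1; exact this
  have h1' : 1 ≤ min x y := le_min h1 h2
  have h2' : 1 ≤ max x y := le_max_of_le_left h1
  unfold muq; dsimp only
  nlinarith [mul_nonneg (by linarith : (0:ℤ) ≤ min x y - 1) (by linarith : (0:ℤ) ≤ 2*q+2 - min x y)]

lemma coord_bound {q x y : ℤ} (hq : 1 ≤ q) (h : inJq q (x,y)) :
    2*x ≤ q^2 + 3*q - 2 ∧ 2*y ≤ q^2 + 3*q - 2 := by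
  have key : ∀ a b : ℤ, 1 ≤ a → a ≤ q → Pq q a b → 2*b ≤ q^2+3*q-2 ∧ 2*a ≤ q^2+3*q-2 := by
    intro a b ha haq hP
    unfold Pq at hP
    constructor
    · nlinarith [mul_nonneg (by linarith : (0:ℤ) ≤ a - 1) (by linarith : (0:ℤ) ≤ 2*q+2-a)]
    · nlinarith
  obtain ⟨h1, h2, h3 | h3⟩ := h
  · exact ⟨(key x y h1 h3.1 h3.2).2, (key x y h1 h3.1 h3.2).1⟩
  · exact ⟨(key y x h2 h3.1 h3.2).1, (key y x h2 h3.1 h3.2).2⟩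

lemma geom_main (q x y t : ℤ) (h1 : 1 ≤ x) (hxy : x ≤ y) (hxq : x ≤ q)
    (hP : Pq q x y) (ht : t ≠ 0) (hu : 1 ≤ x + t) (hv : 1 ≤ y - (q+1-x)*t) :
    inJq q (x+t, y-(q+1-x)*t) ∧ muq q (x+t, y-(q+1-x)*t) < muq q (x,y) := by
  unfold Pq at hP
  obtain ⟨k, hk⟩ : ∃ k : ℤ, k = q+1-x := ⟨_, rfl⟩
  rw [← hk] at hv ⊢
  have hk1 : 1 ≤ k := by omega
  have hy1 : 1 ≤ y := le_trans h1 hxy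
  have hid : (q-x)*(q+3-x) = (k-1)*(k+2) := by rw [hk]; ring
  rw [hid] at hP
  rcases lt_or_gt_of_ne ht with htneg | htpos
  · -- t < 0 : up-left
    have hvy : y < y - k*t := by nlinarith
    have huq : x + t ≤ q := by omega
    have huv : x + t ≤ y - k*t := by linarith
    have hPnew : Pq q (x+t) (y - k*t) := by
      unfold Pq
      nlinarith [mul_nonneg (by linarith : (0:ℤ) ≤ -t) (by linarith : (0:ℤ) ≤ 1 - t)]
    constructor
    · exact ⟨hu, show (1:ℤ) ≤ y - k*t by linarith, Or.inl ⟨huq, hPnew⟩⟩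
    · unfold muq; dsimp only
      rw [max_eq_right huv, min_eq_left huv, max_eq_right hxy, min_eq_left hxy]
      nlinarith [mul_pos (by linarith : (0:ℤ) < -t) (by linarith : (0:ℤ) < -t)]
  · -- t ≥ 1
    have ht1 : 1 ≤ t := htpos
    rcases le_or_gt (x+t) (y - k*t) with huv | hvu
    · -- same side
      have huq : x + t ≤ q := by
        by_contra hcon; push_neg at hcon
        have htk : k ≤ t := by omega
        have hkk : k*k ≤ k*t := mul_le_mul_of_nonneg_left htk (by linarith)
        nlinarith
      have hPnew : Pq q (x+t) (y - k*t) := by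
        unfold Pq
        nlinarith [mul_nonneg (by linarith : (0:ℤ) ≤ t) (by linarith : (0:ℤ) ≤ t - 1)]
      constructor
      · exact ⟨hu, hv, Or.inl ⟨huq, hPnew⟩⟩
      · unfold muq; dsimp only
        rw [max_eq_right huv, min_eq_left huv, max_eq_right hxy, min_eq_left hxy]
        nlinarith [mul_pos (by linarith : (0:ℤ) < t) (by linarith : (0:ℤ) < t)]
    · -- cross side: v < u
      obtain ⟨u, hudef⟩ : ∃ u, u = x + t := ⟨_, rfl⟩
      obtain ⟨v, hvdef⟩ : ∃ v, v = y - k*t := ⟨_, rfl⟩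
      rw [← hudef] at hvu hu
      rw [← hvdef] at hvu hv
      suffices hfin : inJq q (u, v) ∧ muq q (u, v) < muq q (x, y) by
        rw [hudef, hvdef] at hfin; exact hfin
      have hvq : v ≤ q := by
        by_contra hcon; push_neg at hcon
        have htk : k + 1 ≤ t := by omega
        have hkk : k*(k+1) ≤ k*t := mul_le_mul_of_nonneg_left (by omega) (by linarith)
        nlinarith
      have hPnew : Pq q v u := by
        unfold Pq
        rcases le_or_gt t (k-1) with htk | htk
        · nlinarith [mul_nonneg (by linarith : (0:ℤ) ≤ q - v) (by linarith : (0:ℤ) ≤ q+3-v)]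
        · have htk' : k ≤ t := by omega
          have h2a : 2*(q - v) ≥ 2*k*t - (k-1)*(k+2) := by
            have : 2*v ≤ 2*q + (k-1)*(k+2) - 2*k*t := by nlinarith
            linarith
          have ha1 : t - k + 1 ≤ q - v := by
            nlinarith [mul_nonneg (by linarith : (0:ℤ) ≤ k - 1) (by linarith : (0:ℤ) ≤ 2*t - k)]
          nlinarith [mul_nonneg (by linarith : (0:ℤ) ≤ q - v - (t - k + 1)) (by linarith : (0:ℤ) ≤ q - v + (t - k + 1) + 3),
            mul_nonneg (by linarith : (0:ℤ) ≤ t - k + 1) (by linarith : (0:ℤ) ≤ t - k + 1)]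
      have hvu' : v ≤ u := le_of_lt hvu
      constructor
      · exact ⟨hu, hv, Or.inr ⟨hvq, hPnew⟩⟩
      · unfold muq; dsimp only
        rw [max_eq_left hvu', min_eq_right hvu', max_eq_right hxy, min_eq_left hxy]
        -- goal: 2*u + v*(2q+2-v) < 2*y + x*(2q+2-x)
        have hiden : 2*y + x*(2*q+2-x) - (2*u + v*(2*q+2-v))
            = (x-v)*(2*q-x-v) + 2*t*(k-1) := by
          rw [hudef, hvdef, hk]; ring
        rcases le_or_gt v x with hvx | hxv
        · rcases eq_or_lt_of_le hxq with hxeq | hxlt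
          · -- x = q, k = 1
            have hkeq : k = 1 := by omega
            have hyq : y = q := by
              rw [hkeq] at hP; norm_num at hP; omega
            rw [hkeq] at hvdef
            simp only [one_mul] at hvdef
            have hxv' : x - v = t := by omega
            nlinarith [mul_pos (by linarith : (0:ℤ) < t) (by linarith : (0:ℤ) < t)]
          · have hk2 : 2 ≤ k := by omega
            nlinarith [mul_nonneg (by linarith : (0:ℤ) ≤ x - v) (by linarith : (0:ℤ) ≤ 2*q-x-v)]
        · -- x < v
          have hk2 : 2 ≤ k := by omega
          have hvxt : v - x ≤ t - 1 := by linarith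
          have e1 : (v-x)*(2*q-x-v) ≤ (v-x)*(2*k-3) :=
            mul_le_mul_of_nonneg_left (by omega) (by linarith)
          have e2 : (v-x)*(2*k-3) ≤ (t-1)*(2*k-3) :=
            mul_le_mul_of_nonneg_right hvxt (by omega)
          have e3 : (t-1)*(2*k-3) < 2*t*(k-1) := by nlinarith
          linarith [hiden]

lemma peel_sum {f g : ℤ × ℤ → ℝ} (S : Finset (ℤ × ℤ)) (p : ℤ × ℤ) (hp : p ∈ S)
    (hsum : ∑ x ∈ S, f x = ∑ x ∈ S, g x)
    (h : ∀ p' ∈ S, p' ≠ p → f p' = g p') : f p = g p := by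
  classical
  rw [← Finset.add_sum_erase S f hp, ← Finset.add_sum_erase S g hp] at hsum
  have he : ∑ x ∈ S.erase p, f x = ∑ x ∈ S.erase p, g x :=
    Finset.sum_congr rfl fun x hx =>
      h x (Finset.mem_of_mem_erase hx) (Finset.ne_of_mem_erase hx)
  linarith

lemma slopeA_mem (q : ℕ) (hq : 2 ≤ q) (k : ℤ) (hk1 : 1 ≤ k) (hk2 : k ≤ (q:ℤ)) :
    (some (-(k:ℚ)) : Slope) ∈ CnegQ q := by
  rcases eq_or_lt_of_le hk2 with heq | hlt
  · apply Set.mem_union_right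
    have : -(k:ℚ) = -((q:ℕ):ℚ) := by rw [heq]; push_cast; ring
    rw [this]
    right; rfl
  · apply Set.mem_union_left
    apply Set.mem_union_right
    refine ⟨-k, ?_, ?_, Or.inl ?_⟩
    · rw [abs_neg, abs_of_pos (by linarith)]; exact hk1
    · rw [abs_neg, abs_of_pos (by linarith)]; omega
    · push_cast; ring_nf

lemma slopeB_mem (q : ℕ) (hq : 2 ≤ q) (k : ℤ) (hk1 : 1 ≤ k) (hk2 : k ≤ (q:ℤ)) :
    (some (-(1/(k:ℚ))) : Slope) ∈ CnegQ q := by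
  rcases eq_or_lt_of_le hk2 with heq | hlt
  · apply Set.mem_union_right
    have : -(1/(k:ℚ)) = -(1/((q:ℕ):ℚ)) := by rw [heq]; push_cast; ring
    rw [this]
    left; rfl
  · apply Set.mem_union_left
    apply Set.mem_union_right
    refine ⟨-k, ?_, ?_, Or.inr ?_⟩
    · rw [abs_neg, abs_of_pos (by linarith)]; exact hk1
    · rw [abs_neg, abs_of_pos (by linarith)]; omega
    · have : ((-k : ℤ) : ℚ) = -(k:ℚ) := by push_cast; ring
      rw [this, div_neg]

lemma lineA_pred (k x y u v : ℤ) :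
    ((v:ℝ) = ((-(k:ℚ) : ℚ) : ℝ) * (u:ℝ) + ((k*x+y : ℤ) : ℝ)) ↔ k*u + v = k*x + y := by
  push_cast
  constructor
  · intro h
    have h2 : ((k*u + v : ℤ) : ℝ) = ((k*x + y : ℤ) : ℝ) := by push_cast; linarith
    exact_mod_cast h2
  · intro h
    have h2 := congrArg (fun z : ℤ => (z : ℝ)) h
    push_cast at h2
    linarith

lemma lineB_pred (k x y u v : ℤ) (hk : 0 < k) :
    ((v:ℝ) = ((-(1/(k:ℚ)) : ℚ) : ℝ) * (u:ℝ) + ((x + k*y : ℤ) : ℝ)/(k:ℝ)) ↔ u + k*v = x + k*y := by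
  have hk0 : (k:ℝ) ≠ 0 := by exact_mod_cast hk.ne'
  push_cast
  have hcomb : -(1/(k:ℝ))*(u:ℝ) + ((x:ℝ)+(k:ℝ)*(y:ℝ))/(k:ℝ) = (-(u:ℝ) + ((x:ℝ)+(k:ℝ)*(y:ℝ)))/(k:ℝ) := by
    field_simp
  rw [hcomb, eq_div_iff hk0]
  constructor
  · intro h
    have h2 : ((u + k*v : ℤ) : ℝ) = ((x + k*y : ℤ) : ℝ) := by push_cast; nlinarith [h]
    exact_mod_cast h2
  · intro h
    have h2 := congrArg (fun z : ℤ => (z : ℝ)) h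
    push_cast at h2
    nlinarith [h2]

theorem main_solv (q n : ℕ) (hq : 2 ≤ q) (h2n : q^2 + 3*q - 2 ≤ 2*n)
    (f g : ℤ × ℤ → ℝ) (hfg : ClueEquiv n n (CnegQ q) f g) :
    ∀ (N : ℕ) (p : ℤ × ℤ), inJq (q:ℤ) p → (muq (q:ℤ) p).toNat ≤ N → f p = g p := by
  have hq1 : (1:ℤ) ≤ (q:ℤ) := by exact_mod_cast Nat.one_le_of_lt hq
  have hbound : (q:ℤ)^2 + 3*(q:ℤ) - 2 ≤ 2*(n:ℤ) := by
    have h2 : 2 ≤ q^2 + 3*q := by nlinarith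
    zify [h2] at h2n
    linarith
  intro N
  induction N with
  | zero =>
    rintro ⟨x, y⟩ hp hN
    have := mu_pos hp
    omega
  | succ N ih =>
    rintro ⟨x, y⟩ hp hN
    have hx1 : (1:ℤ) ≤ x := hp.1
    have hy1 : (1:ℤ) ≤ y := hp.2.1
    obtain ⟨hxb, hyb⟩ := coord_bound hq1 hp
    have hxn : x ≤ (n:ℤ) := by linarith
    have hyn : y ≤ (n:ℤ) := by linarith
    rcases le_total x y with hxy | hxy
    · -- slope -k, k = q+1-x
      obtain ⟨_, hxq, hP⟩ := ordered_of_inJ hxy hp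
      obtain ⟨k, hk⟩ : ∃ k : ℤ, k = (q:ℤ)+1-x := ⟨_, rfl⟩
      have hk1 : 1 ≤ k := by omega
      have hk2 : k ≤ (q:ℤ) := by omega
      have hclue := hfg _ (slopeA_mem q hq k hk1 hk2) ((k*x+y : ℤ) : ℝ)
      refine peel_sum _ ((x,y) : ℤ × ℤ) ?_ hclue ?_
      · rw [Finset.mem_filter]
        constructor
        · rw [Finset.mem_product, Finset.mem_Icc, Finset.mem_Icc]
          exact ⟨⟨hx1, hxn⟩, ⟨hy1, hyn⟩⟩
        · exact (lineA_pred k x y x y).mpr (by ring)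
      · rintro ⟨u, v⟩ hp' hne
        rw [Finset.mem_filter, Finset.mem_product, Finset.mem_Icc, Finset.mem_Icc] at hp'
        obtain ⟨⟨⟨hu1, hun⟩, hv1, hvn⟩, hpred⟩ := hp'
        have hline : k*u + v = k*x + y := (lineA_pred k x y u v).mp hpred
        obtain ⟨t, htdef⟩ : ∃ t : ℤ, t = u - x := ⟨_, rfl⟩
        have hveq : v = y - k*t := by rw [htdef]; linear_combination hline
        have hts : t ≠ 0 := by
          intro h0
          apply hne
          have : u = x := by omega
          have : v = y := by rw [hveq, h0]; ring
          simp_all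
        have hgeom := geom_main (q:ℤ) x y t hx1 hxy hxq hP hts
          (by omega) (by rw [← hk, ← hveq]; omega)
        rw [← hk] at hgeom
        have hpt : ((x+t : ℤ), (y - k*t : ℤ)) = ((u,v) : ℤ × ℤ) := by
          rw [Prod.mk.injEq]
          exact ⟨by omega, by omega⟩
        rw [hpt] at hgeom
        have hmp := mu_pos hgeom.1
        exact ih (u,v) hgeom.1 (by omega)
    · -- slope -1/k, k = q+1-y
      have hp' := inJq_swap.mp hp
      obtain ⟨_, hyq, hP⟩ := ordered_of_inJ hxy hp'
      obtain ⟨k, hk⟩ : ∃ k : ℤ, k = (q:ℤ)+1-y := ⟨_, rfl⟩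
      have hk1 : 1 ≤ k := by omega
      have hk2 : k ≤ (q:ℤ) := by omega
      have hclue := hfg _ (slopeB_mem q hq k hk1 hk2) (((x + k*y : ℤ) : ℝ)/(k:ℝ))
      refine peel_sum _ ((x,y) : ℤ × ℤ) ?_ hclue ?_
      · rw [Finset.mem_filter]
        constructor
        · rw [Finset.mem_product, Finset.mem_Icc, Finset.mem_Icc]
          exact ⟨⟨hx1, hxn⟩, ⟨hy1, hyn⟩⟩
        · exact (lineB_pred k x y x y (by omega)).mpr (by ring)
      · rintro ⟨u, v⟩ hp'' hne
        rw [Finset.mem_filter, Finset.mem_product, Finset.mem_Icc, Finset.mem_Icc] at hp''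
        obtain ⟨⟨⟨hu1, hun⟩, hv1, hvn⟩, hpred⟩ := hp''
        have hline : u + k*v = x + k*y := (lineB_pred k x y u v (by omega)).mp hpred
        obtain ⟨t, htdef⟩ : ∃ t : ℤ, t = v - y := ⟨_, rfl⟩
        have hueq : u = x - k*t := by rw [htdef]; linear_combination hline
        have hts : t ≠ 0 := by
          intro h0
          apply hne
          have : v = y := by omega
          have : u = x := by rw [hueq, h0]; ring
          simp_all
        have hgeom := geom_main (q:ℤ) y x t hy1 hxy hyq hP hts
          (by omega) (by rw [← hk, ← hueq]; omega)
        rw [← hk] at hgeom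
        have hpt : ((y+t : ℤ), (x - k*t : ℤ)) = ((v,u) : ℤ × ℤ) := by
          rw [Prod.mk.injEq]
          exact ⟨by omega, by omega⟩
        rw [hpt] at hgeom
        have hgeom1 : inJq (q:ℤ) (u,v) := inJq_swap.mp hgeom.1
        have hgeom2 : muq (q:ℤ) (u,v) < muq (q:ℤ) (x,y) := by
          rw [muq_swap]
          rw [show muq (q:ℤ) (x,y) = muq (q:ℤ) (y,x) from muq_swap]
          exact hgeom.2
        have hmp := mu_pos hgeom1
        exact ih (u,v) hgeom1 (by omega)

lemma even_pm (a : ℕ) : 2 ∣ (a-1)*(a+2) := by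
  rcases Nat.even_or_odd a with ⟨b, hb⟩ | ⟨b, hb⟩
  · exact Dvd.dvd.mul_left (by omega) _
  · exact Dvd.dvd.mul_right (by omega) _

lemma phi_mono (q : ℕ) {j j' : ℕ} (h : j ≤ j') :
    q + (j-1)*(j+2)/2 ≤ q + (j'-1)*(j'+2)/2 :=
  Nat.add_le_add_left (Nat.div_le_div_right (Nat.mul_le_mul (by omega) (by omega))) q

lemma tail_count (q : ℕ) (y : ℕ) (hy : q < y) :
    wSum (wq q) y (mOf q) ≤
      ((Finset.Icc 2 q).filter (fun j => y ≤ q + (j-1)*(j+2)/2)).card := by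
  classical
  unfold wSum
  have h1 : ∀ i ∈ Finset.Icc y (mOf q),
      wq q i = if (∃ j, 2 ≤ j ∧ j ≤ q ∧ i = q + (j-1)*(j+2)/2) then 1 else 0 := by
    intro i hi
    rw [Finset.mem_Icc] at hi
    rw [wq, if_neg (by omega)]
  rw [Finset.sum_congr rfl h1, Finset.sum_boole]
  norm_num
  calc ((Finset.Icc y (mOf q)).filter
        (fun i => ∃ j, 2 ≤ j ∧ j ≤ q ∧ i = q + (j-1)*(j+2)/2)).card
      ≤ (((Finset.Icc 2 q).filter (fun j => y ≤ q + (j-1)*(j+2)/2)).image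
          (fun j => q + (j-1)*(j+2)/2)).card := by
        apply Finset.card_le_card
        intro i hi
        rw [Finset.mem_filter, Finset.mem_Icc] at hi
        obtain ⟨⟨hyi, _⟩, j, h2j, hjq, rfl⟩ := hi
        rw [Finset.mem_image]
        exact ⟨j, by rw [Finset.mem_filter, Finset.mem_Icc]; exact ⟨⟨h2j, hjq⟩, hyi⟩, rfl⟩
    _ ≤ _ := Finset.card_image_le

lemma T_card_le (q y : ℕ) :
    ((Finset.Icc 2 q).filter (fun j => y ≤ q + (j-1)*(j+2)/2)).card ≤ q - 1 := by
  calc _ ≤ (Finset.Icc 2 q).card := Finset.card_le_card (Finset.filter_subset _ _)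
    _ = q - 1 := by rw [Nat.card_Icc]; omega

lemma T_top_mem (q y : ℕ) (hq : 2 ≤ q)
    (hpos : 1 ≤ ((Finset.Icc 2 q).filter (fun j => y ≤ q + (j-1)*(j+2)/2)).card) :
    (q + 1 - ((Finset.Icc 2 q).filter (fun j => y ≤ q + (j-1)*(j+2)/2)).card) ∈
      (Finset.Icc 2 q).filter (fun j => y ≤ q + (j-1)*(j+2)/2) := by
  classical
  set T := (Finset.Icc 2 q).filter (fun j => y ≤ q + (j-1)*(j+2)/2) with hT
  set c := T.card with hc
  have hcq : c ≤ q - 1 := by rw [hc, hT]; exact T_card_le q y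
  by_contra hno
  have hsub : T ⊆ Finset.Icc (q+2-c) q := by
    intro j hj
    have hj' := hj
    rw [hT, Finset.mem_filter, Finset.mem_Icc] at hj'
    rw [Finset.mem_Icc]
    refine ⟨?_, hj'.1.2⟩
    by_contra hlt
    push_neg at hlt
    apply hno
    rw [hT, Finset.mem_filter, Finset.mem_Icc]
    refine ⟨⟨by omega, by omega⟩, le_trans hj'.2 (phi_mono q (by omega))⟩
  have hcard := Finset.card_le_card hsub
  rw [Nat.card_Icc] at hcard
  omega

lemma high_inJ (q : ℕ) (hq : 2 ≤ q) (x y : ℕ) (hy : q < y) (hx1 : 1 ≤ x)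
    (hx : x ≤ wSum (wq q) y (mOf q)) : inJq (q:ℤ) ((x:ℤ), (y:ℤ)) := by
  classical
  set T := (Finset.Icc 2 q).filter (fun j => y ≤ q + (j-1)*(j+2)/2) with hT
  set c := T.card with hc
  have hxc : x ≤ c := le_trans hx (by rw [hc, hT]; exact tail_count q y hy)
  have hcq : c ≤ q - 1 := by rw [hc, hT]; exact T_card_le q y
  have hc1 : 1 ≤ c := le_trans hx1 hxc
  have hmem := T_top_mem q y hq (by rw [← hT, ← hc]; exact hc1)
  rw [← hT] at hmem
  rw [Finset.mem_filter, Finset.mem_Icc] at hmem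
  obtain ⟨⟨h2c, _⟩, hyle⟩ := hmem
  -- y ≤ q + (q-c)*(q+3-c)/2  (as j = q+1-c)
  have hj1 : q + 1 - c - 1 = q - c := by omega
  have hj2 : q + 1 - c + 2 = q + 3 - c := by omega
  rw [hj1, hj2] at hyle
  have heven := even_pm (q + 1 - c)
  rw [hj1, hj2] at heven
  have h2y : 2*y ≤ 2*q + (q-c)*(q+3-c) := by
    have := Nat.div_mul_cancel heven
    omega
  -- cast to ℤ
  have h2yZ : 2*(y:ℤ) ≤ 2*(q:ℤ) + ((q:ℤ)-(c:ℤ))*((q:ℤ)+3-(c:ℤ)) := by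
    have e := h2y
    zify [show c ≤ q from by omega, show c ≤ q + 3 from by omega] at e
    exact e
  have hxq : x ≤ q := by omega
  have hy1 : 1 ≤ y := by omega
  refine ⟨show (1:ℤ) ≤ (x:ℤ) by exact_mod_cast hx1,
    show (1:ℤ) ≤ (y:ℤ) by exact_mod_cast hy1,
    Or.inl ⟨show (x:ℤ) ≤ (q:ℤ) by exact_mod_cast hxq, ?_⟩⟩
  · unfold Pq
    have hxcZ : (x:ℤ) ≤ (c:ℤ) := by exact_mod_cast hxc
    have hcqZ : (c:ℤ) ≤ (q:ℤ) - 1 := by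
      have : (c:ℤ) ≤ ((q:ℕ) - 1 : ℕ) := by exact_mod_cast hcq
      omega
    have hx1Z : (1:ℤ) ≤ (x:ℤ) := by exact_mod_cast hx1
    nlinarith [mul_nonneg (by linarith : (0:ℤ) ≤ (c:ℤ) - x)
      (by linarith : (0:ℤ) ≤ 2*(q:ℤ)+3 - x - c)]

lemma gauss_aux (q : ℕ) : ∀ d z, z + d = q →
    2 * (∑ i ∈ Finset.Ioc z q, (q+1-i)) = (q-z)*(q+1-z) := by
  intro d
  induction d with
  | zero =>
    intro z hz
    have : z = q := by omega
    subst this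
    simp
  | succ d ih =>
    intro z hz
    have h1 : z + 1 ≤ q := by omega
    have hsplit := Finset.sum_Ioc_consecutive (fun i => q+1-i) (by omega : z ≤ z+1) h1
    have hsingle : Finset.Ioc z (z+1) = {z+1} := by
      ext a
      simp only [Finset.mem_Ioc, Finset.mem_singleton]
      omega
    have hihv := ih (z+1) (by omega)
    obtain ⟨b, hb⟩ : ∃ b, q - z = b + 1 := ⟨q - z - 1, by omega⟩
    have e1 : q - (z+1) = b := by omega
    have e2 : q + 1 - (z+1) = b + 1 := by omega
    have e3 : q + 1 - z = b + 2 := by omega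
    rw [e1, e2] at hihv
    rw [← hsplit, hsingle, Finset.sum_singleton, e2, hb, e3]
    linarith [hihv]

lemma low_sum (q : ℕ) (hq : 2 ≤ q) (y : ℕ) (h1 : 1 ≤ y) (hyq : y ≤ q) :
    2 * wSum (wq q) y (mOf q) ≤ 2*q + (q-y)*(q+3-y) := by
  classical
  have hqm : q ≤ mOf q := Nat.le_add_right _ _
  obtain ⟨z, rfl⟩ : ∃ z, y = z + 1 := ⟨y - 1, by omega⟩
  have hIcc : Finset.Icc (z+1) (mOf q) = Finset.Ioc z (mOf q) := by
    ext a
    simp only [Finset.mem_Icc, Finset.mem_Ioc]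
    omega
  have hsplit := Finset.sum_Ioc_consecutive (wq q) (by omega : z ≤ q) hqm
  have hmid : ∀ i ∈ Finset.Ioc z q, wq q i = q + 1 - i := by
    intro i hi
    rw [Finset.mem_Ioc] at hi
    rw [wq, if_pos ⟨by omega, hi.2⟩]
  have hIoc2 : Finset.Ioc q (mOf q) = Finset.Icc (q+1) (mOf q) := by
    ext a
    simp only [Finset.mem_Icc, Finset.mem_Ioc]
    omega
  have htail : (∑ i ∈ Finset.Ioc q (mOf q), wq q i) = wSum (wq q) (q+1) (mOf q) := by
    unfold wSum
    rw [hIoc2]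
  have htb : wSum (wq q) (q+1) (mOf q) ≤ q - 1 :=
    le_trans (tail_count q (q+1) (by omega)) (T_card_le q (q+1))
  have hgauss := gauss_aux q (q - z) z (by omega)
  have hw : wSum (wq q) (z+1) (mOf q)
      = (∑ i ∈ Finset.Ioc z q, (q+1-i)) + wSum (wq q) (q+1) (mOf q) :=
    calc wSum (wq q) (z+1) (mOf q) = ∑ i ∈ Finset.Ioc z (mOf q), wq q i := by
          unfold wSum; rw [hIcc]
      _ = (∑ i ∈ Finset.Ioc z q, wq q i) + ∑ i ∈ Finset.Ioc q (mOf q), wq q i := hsplit.symm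
      _ = (∑ i ∈ Finset.Ioc z q, (q+1-i)) + wSum (wq q) (q+1) (mOf q) :=
          congrArg₂ (· + ·) (Finset.sum_congr rfl hmid) htail
  rw [hw]
  obtain ⟨b, hb⟩ : ∃ b, q - z = b + 1 := ⟨q - z - 1, by omega⟩
  have e1 : q - (z+1) = b := by omega
  have e2 : q + 1 - z = b + 2 := by omega
  have e3 : q + 3 - (z+1) = b + 3 := by omega
  rw [e1, e3]
  rw [hb, e2] at hgauss
  -- 2*((S) + tail) ≤ 2q + b*(b+3),  2*S = (b+1)*(b+2), tail ≤ q-1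
  have htb' : wSum (wq q) (q+1) (mOf q) + 1 ≤ q := by omega
  nlinarith [hgauss, htb']

lemma low_inJ (q : ℕ) (hq : 2 ≤ q) (x y : ℕ) (hyq : y ≤ q) (hy1 : 1 ≤ y) (hx1 : 1 ≤ x)
    (hx : x ≤ wSum (wq q) y (mOf q)) : inJq (q:ℤ) ((x:ℤ), (y:ℤ)) := by
  have h := low_sum q hq y hy1 hyq
  have h2x : 2*x ≤ 2*q + (q-y)*(q+3-y) := by omega
  have h2xZ : 2*(x:ℤ) ≤ 2*(q:ℤ) + ((q:ℤ)-(y:ℤ))*((q:ℤ)+3-(y:ℤ)) := by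
    zify [show y ≤ q from hyq, show y ≤ q + 3 from by omega] at h2x
    exact h2x
  exact ⟨show (1:ℤ) ≤ (x:ℤ) by exact_mod_cast hx1,
    show (1:ℤ) ≤ (y:ℤ) by exact_mod_cast hy1,
    Or.inr ⟨show (y:ℤ) ≤ (q:ℤ) by exact_mod_cast hyq, h2xZ⟩⟩

lemma wSum_inJ (q : ℕ) (hq : 2 ≤ q) (x y : ℕ) (hy1 : 1 ≤ y) (hx1 : 1 ≤ x)
    (hx : x ≤ wSum (wq q) y (mOf q)) : inJq (q:ℤ) ((x:ℤ), (y:ℤ)) := by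
  rcases le_or_gt y q with h | h
  · exact low_inJ q hq x y h hy1 hx1 hx
  · exact high_inJ q hq x y h hx1 hx

end Aux

/-- for `q ≥ 2` and `2n ≥ q² + 3q − 2`, every entry of the staircase region
`J_{ω_q}` is uniquely solvable with respect to `C_{−q}` on `I_{n,n}`. -/
theorem staircase_region_uniqSolv (q : ℕ) (hq : 2 ≤ q) (n : ℕ) (hn : 0 < n)
    (h2n : q ^ 2 + 3 * q - 2 ≤ 2 * n) :
    ∀ x y : ℕ, 1 ≤ y → y ≤ mOf q → 1 ≤ x → x ≤ wSum (wq q) y (mOf q) →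
      UniqSolv n n (CnegQ q) ((x : ℤ), (y : ℤ)) := by
  intro x y hy1 hym hx1 hxw f g hfg
  have hinJ : inJq (q:ℤ) ((x:ℤ),(y:ℤ)) := wSum_inJ q hq x y hy1 hx1 hxw
  exact main_solv q n hq h2n f g hfg (muq (q:ℤ) ((x:ℤ),(y:ℤ))).toNat _ hinJ le_rfl
end
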